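/- arXiv:math/0201282 — 12 statements merged into one kernel-verified Lean document; each statement's English description precedes it below -/
import Mathlib

section
/- Let G be a topological group, and let H ⊆ K be two subgroups of G. Let A be a topological space with a continuous H-action and B a topological space with a continuous K-action, and let f : A → B be an H-equivariant map which is H-open. Then the induced map F : G ×_H A → G ×_K B, [g,a]_H ↦ [g, f(a)]_K, between the twisted products equipped with their quotient topologies, is G-open: the image under F of every G-invariant open subset of G ×_H A is open in G ×_K B. -/
open Pointwise

/-- The relation defining the twisted product `G ×_H A`:
`(g, a) ∼ (g h⁻¹, h • a)` for `h ∈ H`.  The twisted product `Quot (twistRel H A)`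
carries the quotient topology coming from the product topology on `G × A`. -/
def twistRel {G : Type*} [Group G] (H : Subgroup G) (A : Type*) [MulAction H A] :
    G × A → G × A → Prop :=
  fun p q => ∃ h : H, q.1 = p.1 * (h : G)⁻¹ ∧ q.2 = h • p.2

lemma twistRel_equiv {G : Type*} [Group G] (H : Subgroup G) (A : Type*) [MulAction H A] :
    Equivalence (twistRel H A) := by
  constructor
  · intro p; exact ⟨1, by simp, by simp⟩
  · rintro p q ⟨h, h1, h2⟩
    refine ⟨h⁻¹, ?_, ?_⟩
    · simp [h1, mul_assoc]
    · simp [h2]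
  · rintro p q r ⟨h1, e1, e2⟩ ⟨h2, e3, e4⟩
    refine ⟨h2 * h1, ?_, ?_⟩
    · simp [e3, e1, mul_assoc]
    · simp [e4, e2, mul_smul]

lemma twistRel_of_mk_eq {G : Type*} [Group G] (H : Subgroup G) (A : Type*) [MulAction H A]
    {x y : G × A} (h : Quot.mk (twistRel H A) x = Quot.mk (twistRel H A) y) :
    twistRel H A x y :=
  ((twistRel_equiv H A).eqvGen_iff).mp (Quot.eq.mp h)

theorem statement1 {G : Type*} [Group G] [TopologicalSpace G] [IsTopologicalGroup G]
    (H K : Subgroup G) (hHK : H ≤ K)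
    {A B : Type*} [TopologicalSpace A] [TopologicalSpace B]
    [MulAction H A] [ContinuousSMul H A]
    [MulAction K B] [ContinuousSMul K B]
    (f : A → B)
    (hf : ∀ (h : H) (a : A), f (h • a) = (⟨(h : G), hHK h.2⟩ : K) • f a)
    (hopen : ∀ U : Set A, IsOpen U → (∀ (h : H) (a : A), a ∈ U → h • a ∈ U) →
      IsOpen (f '' U)) :
    ∃ (F : Quot (twistRel H A) → Quot (twistRel K B))
      (αA : G → Quot (twistRel H A) → Quot (twistRel H A)),
      (∀ (g : G) (a : A), F (Quot.mk _ (g, a)) = Quot.mk _ (g, f a)) ∧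
      (∀ (g' g : G) (a : A), αA g' (Quot.mk _ (g, a)) = Quot.mk _ (g' * g, a)) ∧
      (∀ W : Set (Quot (twistRel H A)), IsOpen W →
        (∀ (g : G) (x : Quot (twistRel H A)), x ∈ W → αA g x ∈ W) →
        IsOpen (F '' W)) := by
  have Fsound : ∀ p q, twistRel H A p q →
      Quot.mk (twistRel K B) (p.1, f p.2) = Quot.mk (twistRel K B) (q.1, f q.2) := by
    rintro p q ⟨h, h1, h2⟩
    exact Quot.sound ⟨⟨(h : G), hHK h.2⟩, h1, by rw [h2, hf]⟩
  have asound : ∀ (g' : G) (p q : G × A), twistRel H A p q →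
      Quot.mk (twistRel H A) (g' * p.1, p.2) = Quot.mk (twistRel H A) (g' * q.1, q.2) := by
    rintro g' p q ⟨h, h1, h2⟩
    exact Quot.sound ⟨h, by rw [h1, mul_assoc], h2⟩
  set F : Quot (twistRel H A) → Quot (twistRel K B) :=
    Quot.lift (fun p => Quot.mk (twistRel K B) (p.1, f p.2)) Fsound with hF
  set αA : G → Quot (twistRel H A) → Quot (twistRel H A) :=
    fun g' => Quot.lift (fun p => Quot.mk (twistRel H A) (g' * p.1, p.2)) (asound g') with hαA
  refine ⟨F, αA, fun g a => rfl, fun g' g a => rfl, ?_⟩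
  intro W hW hinv
  -- The slice of W at g = 1
  set U : Set A := {a | Quot.mk (twistRel H A) ((1 : G), a) ∈ W} with hU
  have key : ∀ (g' g : G) (a : A), αA g' (Quot.mk _ (g, a)) = Quot.mk _ (g' * g, a) :=
    fun _ _ _ => rfl
  have hmem : ∀ (g : G) (a : A), Quot.mk (twistRel H A) (g, a) ∈ W ↔ a ∈ U := by
    intro g a
    constructor
    · intro h
      have := hinv g⁻¹ _ h
      simpa [key, hU] using this
    · intro h
      have := hinv g _ h
      simpa [key] using this
  have hUopen : IsOpen U := by
    have hV : IsOpen (Quot.mk (twistRel H A) ⁻¹' W) := hW.preimage continuous_quot_mk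
    have : U = (fun a => ((1 : G), a)) ⁻¹' (Quot.mk (twistRel H A) ⁻¹' W) := rfl
    rw [this]
    exact hV.preimage (Continuous.prodMk_right 1)
  have hUinv : ∀ (h : H) (a : A), a ∈ U → h • a ∈ U := by
    intro h a ha
    have : Quot.mk (twistRel H A) (((h : G))⁻¹, h • a) ∈ W := by
      have heq : Quot.mk (twistRel H A) ((1 : G), a)
          = Quot.mk (twistRel H A) (((h : G))⁻¹, h • a) :=
        Quot.sound ⟨h, by simp, rfl⟩
      rw [← heq]; exact ha
    exact (hmem _ _).mp this
  have hfU : IsOpen (f '' U) := hopen U hUopen hUinv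
  have hT : IsOpen (⋃ k : K, k • (f '' U)) :=
    isOpen_iUnion fun k => hfU.smul k
  rw [isOpen_coinduced]
  have hset : Quot.mk (twistRel K B) ⁻¹' (F '' W)
      = Prod.snd ⁻¹' (⋃ k : K, k • (f '' U)) := by
    ext ⟨g, b⟩
    simp only [Set.mem_preimage, Set.mem_image, Set.mem_iUnion]
    constructor
    · rintro ⟨x, hx, hFx⟩
      obtain ⟨⟨g₀, a⟩, rfl⟩ := Quot.exists_rep x
      have ha : a ∈ U := (hmem g₀ a).mp hx
      obtain ⟨k, -, e2⟩ := twistRel_of_mk_eq K B (x := (g₀, f a)) (y := (g, b)) hFx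
      exact ⟨k, ⟨f a, ⟨a, ha, rfl⟩, e2.symm⟩⟩
    · rintro ⟨k, b', ⟨a, ha, rfl⟩, rfl⟩
      refine ⟨Quot.mk _ (g * (k : G), a), (hmem _ a).mpr ha, ?_⟩
      exact Quot.sound ⟨k, by simp [mul_assoc], rfl⟩
  rw [hset]
  exact hT.preimage continuous_snd
end

section
/- Let Δ₁ be a compact convex polytope in ℝ^N, i.e. the convex hull of a finite subset of ℝ^N. For 0 < r ≤ ∞ set Δ_{<r} = { a•δ : 0 ≤ a < r, δ ∈ Δ₁ }, and let Δ = Δ_{<∞} = { a•δ : a ≥ 0, δ ∈ Δ₁ }. Then for every finite r > 0, the set Δ_{<r} is an open subset of Δ, where Δ carries the subspace topology induced from ℝ^N. -/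
open Filter Topology Finset

namespace Statement2Aux

variable {N : ℕ}

noncomputable def phi (S : Finset (Fin N → ℝ)) : ({x // x ∈ S} → ℝ) →ₗ[ℝ] (Fin N → ℝ) where
  toFun c := ∑ i : {x // x ∈ S}, c i • (i : Fin N → ℝ)
  map_add' a b := by
    simp [add_smul, Finset.sum_add_distrib]
  map_smul' m a := by
    simp [Finset.smul_sum, smul_smul]

def IsRep (S : Finset (Fin N → ℝ)) (y : Fin N → ℝ) (c : {x // x ∈ S} → ℝ) : Prop :=
  (∀ i, 0 ≤ c i) ∧ phi S c = y

lemma phi_cont (S : Finset (Fin N → ℝ)) : Continuous (phi S) :=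
  (phi S).continuous_of_finiteDimensional

lemma sum_cont (S : Finset (Fin N → ℝ)) :
    Continuous (fun c : {x // x ∈ S} → ℝ => ∑ i, c i) :=
  continuous_finset_sum _ fun i _ => continuous_apply i

lemma isClosed_rep (S : Finset (Fin N → ℝ)) (y : Fin N → ℝ) :
    IsClosed {c : {x // x ∈ S} → ℝ | IsRep S y c} := by
  have : {c : {x // x ∈ S} → ℝ | IsRep S y c} =
      (⋂ i, {c : {x // x ∈ S} → ℝ | 0 ≤ c i}) ∩ {c | phi S c = y} := by
    ext c; simp [IsRep, Set.mem_iInter, forall_and]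
  rw [this]
  exact ((isClosed_iInter fun i =>
    isClosed_le continuous_const (continuous_apply i))).inter
    (isClosed_eq (phi_cont S) continuous_const)

lemma exists_min_rep (S : Finset (Fin N → ℝ)) (y : Fin N → ℝ)
    (h : ∃ c, IsRep S y c) :
    ∃ c, IsRep S y c ∧ ∀ d, IsRep S y d → ∑ i, c i ≤ ∑ i, d i := by
  obtain ⟨c₀, hc₀⟩ := h
  set σ₀ := ∑ i, c₀ i with hσ₀def
  have hσ₀ : 0 ≤ σ₀ := Finset.sum_nonneg fun i _ => hc₀.1 i
  set Kc := {c : {x // x ∈ S} → ℝ | IsRep S y c ∧ ∑ i, c i ≤ σ₀} with hKcdef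
  have hKcl : IsClosed Kc :=
    (isClosed_rep S y).inter (isClosed_le (sum_cont S) continuous_const)
  have hKsub : Kc ⊆ Set.pi Set.univ (fun _ => Set.Icc 0 σ₀) := by
    rintro c ⟨⟨hc1, _⟩, hc2⟩ i _
    refine ⟨hc1 i, ?_⟩
    calc c i ≤ ∑ j, c j := Finset.single_le_sum (fun j _ => hc1 j) (Finset.mem_univ i)
    _ ≤ σ₀ := hc2
  have hKcomp : IsCompact Kc :=
    IsCompact.of_isClosed_subset (isCompact_univ_pi fun _ => isCompact_Icc) hKcl hKsub
  have hne : Kc.Nonempty := ⟨c₀, hc₀, le_refl _⟩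
  obtain ⟨c, hcK, hmin⟩ := hKcomp.exists_isMinOn hne ((sum_cont S).continuousOn)
  refine ⟨c, hcK.1, fun d hd => ?_⟩
  by_cases h' : ∑ i, d i ≤ σ₀
  · exact hmin ⟨hd, h'⟩
  · exact le_trans hcK.2 (le_of_not_ge h')

lemma mem_hull_iff (S : Finset (Fin N → ℝ)) (y : Fin N → ℝ) :
    y ∈ convexHull ℝ (S : Set (Fin N → ℝ)) ↔
      ∃ w : {x // x ∈ S} → ℝ, (∀ i, 0 ≤ w i) ∧ ∑ i, w i = 1 ∧ phi S w = y := by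
  classical
  rw [Finset.convexHull_eq]
  constructor
  · rintro ⟨w, hw0, hw1, hwy⟩
    refine ⟨fun i => w (i : Fin N → ℝ), fun i => hw0 _ i.2, ?_, ?_⟩
    · rw [← hw1, Finset.univ_eq_attach, Finset.sum_attach S w]
    · rw [Finset.centerMass_eq_of_sum_1 _ _ hw1] at hwy
      rw [← hwy]
      simp only [phi, LinearMap.coe_mk, AddHom.coe_mk, id]
      change ∑ i : {x // x ∈ S}, w i • (i : Fin N → ℝ) = _
      rw [Finset.univ_eq_attach, Finset.sum_attach S (fun x => w x • x)]
  · rintro ⟨w, hw0, hw1, hwy⟩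
    refine ⟨fun x => if h : x ∈ S then w ⟨x, h⟩ else 0, ?_, ?_, ?_⟩
    · intro x hx
      simp only [dif_pos hx]
      exact hw0 _
    · rw [← hw1, Finset.univ_eq_attach, ← Finset.sum_attach S
        (fun x => if h : x ∈ S then w ⟨x, h⟩ else 0)]
      apply Finset.sum_congr rfl
      intro i _
      simp [i.2]
    · rw [Finset.centerMass_eq_of_sum_1]
      · rw [← hwy]
        simp only [phi, LinearMap.coe_mk, AddHom.coe_mk, id]
        change _ = ∑ i : {x // x ∈ S}, w i • (i : Fin N → ℝ)
        rw [Finset.univ_eq_attach, ← Finset.sum_attach S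
          (fun x => (if h : x ∈ S then w ⟨x, h⟩ else 0) • x)]
        apply Finset.sum_congr rfl
        intro i _
        simp [i.2]
      · rw [← hw1, Finset.univ_eq_attach, ← Finset.sum_attach S
          (fun x => if h : x ∈ S then w ⟨x, h⟩ else 0)]
        apply Finset.sum_congr rfl
        intro i _
        simp [i.2]

/-- Translation of the `a • δ` form with `a < r` into representations. -/
lemma setA_eq (S : Finset (Fin N → ℝ)) (hS : S.Nonempty) (r : ℝ) (hr : 0 < r) :
    {x : Fin N → ℝ | ∃ (a : ℝ) (δ : Fin N → ℝ),
        0 ≤ a ∧ a < r ∧ δ ∈ convexHull ℝ (S : Set (Fin N → ℝ)) ∧ x = a • δ}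
      = {y : Fin N → ℝ | ∃ c, IsRep S y c ∧ ∑ i, c i < r} := by
  ext x
  simp only [Set.mem_setOf_eq]
  constructor
  · rintro ⟨a, δ, ha0, har, hδ, rfl⟩
    obtain ⟨w, hw0, hw1, hwδ⟩ := (mem_hull_iff S δ).1 hδ
    refine ⟨a • w, ⟨fun i => mul_nonneg ha0 (hw0 i), ?_⟩, ?_⟩
    · rw [map_smul, hwδ]
    · have : ∑ i, (a • w) i = a * ∑ i, w i := by
        simp [Finset.mul_sum]
      rw [this, hw1, mul_one]; exact har
  · rintro ⟨c, ⟨hc0, hcx⟩, hcr⟩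
    set σ := ∑ i, c i with hσdef
    have hσ0 : 0 ≤ σ := Finset.sum_nonneg fun i _ => hc0 i
    rcases eq_or_lt_of_le hσ0 with hσ | hσ
    · -- σ = 0 : all coefficients zero, x = 0
      have hc_all : ∀ i, c i = 0 := by
        intro i
        have := (Finset.sum_eq_zero_iff_of_nonneg (fun j _ => hc0 j)).1 hσ.symm
        exact this i (Finset.mem_univ i)
      have hx0 : x = 0 := by
        rw [← hcx]
        simp only [phi, LinearMap.coe_mk, AddHom.coe_mk]
        apply Finset.sum_eq_zero
        intro i _
        rw [hc_all i, zero_smul]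
      obtain ⟨s₀, hs₀⟩ := hS
      refine ⟨0, s₀, le_refl 0, hr, subset_convexHull ℝ _ hs₀, ?_⟩
      rw [hx0, zero_smul]
    · refine ⟨σ, σ⁻¹ • x, hσ0, hcr, ?_, ?_⟩
      · rw [mem_hull_iff]
        refine ⟨σ⁻¹ • c, fun i => mul_nonneg (inv_nonneg.2 hσ0) (hc0 i), ?_, ?_⟩
        · have : ∑ i, (σ⁻¹ • c) i = σ⁻¹ * σ := by simp [Finset.mul_sum, hσdef]
          rw [this, inv_mul_cancel₀ (ne_of_gt hσ)]
        · rw [map_smul, hcx]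
      · rw [smul_smul, mul_inv_cancel₀ (ne_of_gt hσ), one_smul]

/-- Translation of the cone `Δ` into representations. -/
lemma setD_eq (S : Finset (Fin N → ℝ)) (hS : S.Nonempty) :
    {x : Fin N → ℝ | ∃ (a : ℝ) (δ : Fin N → ℝ),
        0 ≤ a ∧ δ ∈ convexHull ℝ (S : Set (Fin N → ℝ)) ∧ x = a • δ}
      = {y : Fin N → ℝ | ∃ c, IsRep S y c} := by
  ext x
  simp only [Set.mem_setOf_eq]
  constructor
  · rintro ⟨a, δ, ha0, hδ, rfl⟩
    obtain ⟨w, hw0, hw1, hwδ⟩ := (mem_hull_iff S δ).1 hδ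
    exact ⟨a • w, ⟨fun i => mul_nonneg ha0 (hw0 i), by rw [map_smul, hwδ]⟩⟩
  · rintro ⟨c, hc0, hcx⟩
    set σ := ∑ i, c i with hσdef
    have hσ0 : 0 ≤ σ := Finset.sum_nonneg fun i _ => hc0 i
    rcases eq_or_lt_of_le hσ0 with hσ | hσ
    · have hc_all : ∀ i, c i = 0 := by
        intro i
        have := (Finset.sum_eq_zero_iff_of_nonneg (fun j _ => hc0 j)).1 hσ.symm
        exact this i (Finset.mem_univ i)
      have hx0 : x = 0 := by
        rw [← hcx]
        simp only [phi, LinearMap.coe_mk, AddHom.coe_mk]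
        apply Finset.sum_eq_zero
        intro i _
        rw [hc_all i, zero_smul]
      obtain ⟨s₀, hs₀⟩ := hS
      exact ⟨0, s₀, le_refl 0, subset_convexHull ℝ _ hs₀, by rw [hx0, zero_smul]⟩
    · refine ⟨σ, σ⁻¹ • x, hσ0, ?_, ?_⟩
      · rw [mem_hull_iff]
        refine ⟨σ⁻¹ • c, fun i => mul_nonneg (inv_nonneg.2 hσ0) (hc0 i), ?_, ?_⟩
        · have : ∑ i, (σ⁻¹ • c) i = σ⁻¹ * σ := by simp [Finset.mul_sum, hσdef]
          rw [this, inv_mul_cancel₀ (ne_of_gt hσ)]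
        · rw [map_smul, hcx]
      · rw [smul_smul, mul_inv_cancel₀ (ne_of_gt hσ), one_smul]

/-- The key analytic fact: the set of points of the cone all of whose representations
have total mass at least `r` is closed. -/
lemma isClosed_T (S : Finset (Fin N → ℝ)) (r : ℝ) (hr : 0 < r) :
    IsClosed {y : Fin N → ℝ | (∃ c, IsRep S y c) ∧
      ∀ c, IsRep S y c → r ≤ ∑ i, c i} := by
  apply IsSeqClosed.isClosed
  intro y x hy hyx
  -- choose minimal representations
  choose cmin hcrep hcmin using fun n => exists_min_rep S (y n) (hy n).1
  have hsum_r : ∀ n, r ≤ ∑ i, cmin n i := fun n => (hy n).2 _ (hcrep n)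
  set σ : ℕ → ℝ := fun n => ∑ i, cmin n i with hσdef
  have hσpos : ∀ n, 0 < 1 + σ n := fun n => by
    have := hsum_r n; simp only [hσdef]; linarith
  set t : ℕ → ℝ := fun n => (1 + σ n)⁻¹ with htdef
  have htpos : ∀ n, 0 < t n := fun n => inv_pos.2 (hσpos n)
  set u : ℕ → ({x // x ∈ S} → ℝ) := fun n => t n • cmin n with hudef
  set C : Set (ℝ × ({x // x ∈ S} → ℝ)) :=
    {p | 0 ≤ p.1 ∧ (∀ i, 0 ≤ p.2 i) ∧ p.1 + ∑ i, p.2 i = 1} with hCdef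
  have hCcl : IsClosed C := by
    have hCeq : C = {p : ℝ × ({x // x ∈ S} → ℝ) | 0 ≤ p.1} ∩
        ((⋂ i, {p : ℝ × ({x // x ∈ S} → ℝ) | 0 ≤ p.2 i}) ∩
          {p : ℝ × ({x // x ∈ S} → ℝ) | p.1 + ∑ i, p.2 i = 1}) := by
      ext p
      simp only [hCdef, Set.mem_setOf_eq, Set.mem_inter_iff, Set.mem_iInter]
    rw [hCeq]
    refine (isClosed_le continuous_const continuous_fst).inter ?_
    refine IsClosed.inter ?_ ?_
    · exact isClosed_iInter fun i => isClosed_le continuous_const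
        ((continuous_apply i).comp continuous_snd)
    · exact isClosed_eq (continuous_fst.add
        ((continuous_finset_sum _ fun i _ => continuous_apply i).comp continuous_snd))
        continuous_const
  have hCsub : C ⊆ (Set.Icc (0:ℝ) 1) ×ˢ Set.pi Set.univ (fun _ => Set.Icc (0:ℝ) 1) := by
    rintro ⟨a, b⟩ ⟨h1, h2, h3⟩
    have hbsum : 0 ≤ ∑ i, b i := Finset.sum_nonneg fun i _ => h2 i
    constructor
    · exact ⟨h1, by linarith⟩
    · intro i _
      refine ⟨h2 i, ?_⟩
      have : b i ≤ ∑ j, b j :=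
        Finset.single_le_sum (fun j _ => h2 j) (Finset.mem_univ i)
      linarith
  have hCc : IsCompact C :=
    IsCompact.of_isClosed_subset
      (isCompact_Icc.prod (isCompact_univ_pi fun _ => isCompact_Icc)) hCcl hCsub
  have hmem : ∀ n, (t n, u n) ∈ C := by
    intro n
    refine ⟨(htpos n).le, fun i => mul_nonneg (htpos n).le ((hcrep n).1 i), ?_⟩
    have : ∑ i, (u n) i = t n * σ n := by
      simp [hudef, Finset.mul_sum, hσdef]
    rw [this]
    simp only [htdef]
    have hne := (hσpos n).ne'
    field_simp
  obtain ⟨⟨ti, ui⟩, hCi, ψ, hψ, hlim⟩ := hCc.tendsto_subseq hmem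
  have hlt : Tendsto (fun k => t (ψ k)) atTop (𝓝 ti) :=
    (continuous_fst.tendsto _).comp hlim
  have hlu : Tendsto (fun k => u (ψ k)) atTop (𝓝 ui) :=
    (continuous_snd.tendsto _).comp hlim
  have hyψ : Tendsto (fun k => y (ψ k)) atTop (𝓝 x) := hyx.comp hψ.tendsto_atTop
  have hti0 : 0 ≤ ti := hCi.1
  have hui0 : ∀ i, 0 ≤ ui i := hCi.2.1
  have hphi_u : ∀ n, phi S (u n) = t n • y n := by
    intro n
    rw [hudef]
    simp only
    rw [map_smul, (hcrep n).2]
  have hphi_ui : phi S ui = ti • x := by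
    have h1 : Tendsto (fun k => phi S (u (ψ k))) atTop (𝓝 (phi S ui)) :=
      ((phi_cont S).tendsto _).comp hlu
    have h2 : Tendsto (fun k => phi S (u (ψ k))) atTop (𝓝 (ti • x)) := by
      simp only [hphi_u]
      exact hlt.smul hyψ
    exact tendsto_nhds_unique h1 h2
  rcases eq_or_lt_of_le hti0 with hti | hti
  · -- case ti = 0 : contradiction with minimality
    exfalso
    have hsumui : ∑ i, ui i = 1 := by
      have := hCi.2.2
      simp only at this
      rw [← hti] at this
      linarith
    have hphi_ui0 : phi S ui = 0 := by rw [hphi_ui, ← hti, zero_smul]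
    -- eventually, cmin (ψ k) i ≥ ui i for all i
    have hev : ∀ i, ∀ᶠ k in atTop, t (ψ k) * ui i ≤ u (ψ k) i := by
      intro i
      rcases eq_or_lt_of_le (hui0 i) with h0 | h0
      · filter_upwards with k
        rw [← h0, mul_zero]
        exact mul_nonneg (htpos _).le ((hcrep _).1 i)
      · have htt : Tendsto (fun k => u (ψ k) i - t (ψ k) * ui i) atTop
            (𝓝 (ui i - ti * ui i)) := by
          exact ((tendsto_pi_nhds.1 hlu) i).sub (hlt.mul tendsto_const_nhds)
        rw [← hti, zero_mul, sub_zero] at htt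
        have := htt (isOpen_Ioi.mem_nhds h0)
        filter_upwards [this] with k hk
        simp only [Set.mem_preimage, Set.mem_Ioi] at hk
        linarith
    have hev' : ∀ᶠ k in atTop, ∀ i, t (ψ k) * ui i ≤ u (ψ k) i :=
      eventually_all.2 hev
    obtain ⟨k, hk⟩ := hev'.exists
    have hge : ∀ i, ui i ≤ cmin (ψ k) i := by
      intro i
      have h1 := hk i
      have h2 : u (ψ k) i = t (ψ k) * cmin (ψ k) i := rfl
      rw [h2] at h1
      exact le_of_mul_le_mul_left h1 (htpos (ψ k))
    have hrepd : IsRep S (y (ψ k)) (cmin (ψ k) - ui) := by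
      constructor
      · intro i
        simp only [Pi.sub_apply, sub_nonneg]
        exact hge i
      · rw [map_sub, (hcrep (ψ k)).2, hphi_ui0, sub_zero]
    have := hcmin (ψ k) _ hrepd
    have hsub : ∑ i, (cmin (ψ k) - ui) i = σ (ψ k) - 1 := by
      simp only [Pi.sub_apply, Finset.sum_sub_distrib, hsumui, hσdef]
    rw [hsub] at this
    simp only [hσdef] at this
    linarith
  · -- case ti > 0 : x has a representation, and we analyze it
    have htine : ti ≠ 0 := ne_of_gt hti
    set ci : {x // x ∈ S} → ℝ := ti⁻¹ • ui with hcidef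
    have hcψ : ∀ k, cmin (ψ k) = (t (ψ k))⁻¹ • u (ψ k) := by
      intro k
      rw [hudef]
      simp only
      rw [inv_smul_smul₀ (ne_of_gt (htpos (ψ k)))]
    have hclim : Tendsto (fun k => cmin (ψ k)) atTop (𝓝 ci) := by
      simp only [hcψ]
      exact (hlt.inv₀ htine).smul hlu
    have hcirep : IsRep S x ci := by
      refine ⟨fun i => mul_nonneg (inv_nonneg.2 hti0) (hui0 i), ?_⟩
      rw [hcidef, map_smul, hphi_ui, smul_smul, inv_mul_cancel₀ htine, one_smul]
    have hσlim : Tendsto (fun k => σ (ψ k)) atTop (𝓝 (∑ i, ci i)) := by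
      have := ((sum_cont S).tendsto _).comp hclim
      exact this
    set σi := ∑ i, ci i with hσidef
    have hσir : r ≤ σi :=
      ge_of_tendsto hσlim (Eventually.of_forall fun k => hsum_r (ψ k))
    refine ⟨⟨ci, hcirep⟩, ?_⟩
    intro d hd
    by_contra hdr
    push_neg at hdr
    set a := ∑ i, d i with hadef
    have har : a < r := hdr
    have haσ : a < σi := lt_of_lt_of_le har hσir
    set θ := (r - a) / (2 * (σi - a)) with hθdef
    have hθpos : 0 < θ := div_pos (by linarith) (by linarith)
    have hθlt : θ ≤ 1 / 2 := by
      rw [hθdef, div_le_div_iff₀ (by linarith) (by norm_num)]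
      nlinarith
    have hθ1 : θ < 1 := lt_of_le_of_lt hθlt (by norm_num)
    set e : {x // x ∈ S} → ℝ := (1 - θ) • d + θ • ci with hedef
    have he0 : ∀ i, 0 ≤ e i := by
      intro i
      have := hd.1 i
      have := hcirep.1 i
      simp only [hedef, Pi.add_apply, Pi.smul_apply, smul_eq_mul]
      nlinarith
    have hephi : phi S e = x := by
      rw [hedef, map_add, map_smul, map_smul, hd.2, hcirep.2, ← add_smul]
      norm_num
    have hesum : ∑ i, e i = a + θ * (σi - a) := by
      simp only [hedef, Pi.add_apply, Pi.smul_apply, smul_eq_mul,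
        Finset.sum_add_distrib, ← Finset.mul_sum, ← hadef, ← hσidef]
      ring
    have hesum_lt : ∑ i, e i < r := by
      have hθval : θ * (σi - a) = (r - a) / 2 := by
        rw [hθdef]
        have hne : σi - a ≠ 0 := ne_of_gt (by linarith)
        field_simp
      rw [hesum, hθval]
      linarith
    -- eventually the perturbed representation works
    set g : ℕ → ({x // x ∈ S} → ℝ) := fun k => e + (cmin (ψ k) - ci) with hgdef
    have hgphi : ∀ k, phi S (g k) = y (ψ k) := by
      intro k
      rw [hgdef]
      simp only
      rw [map_add, map_sub, hephi, (hcrep (ψ k)).2, hcirep.2]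
      abel
    have hgsum : Tendsto (fun k => ∑ i, g k i) atTop (𝓝 (∑ i, e i)) := by
      have : Tendsto g atTop (𝓝 (e + (ci - ci))) := by
        exact tendsto_const_nhds.add (hclim.sub tendsto_const_nhds)
      have h2 : e + (ci - ci) = e := by simp
      rw [h2] at this
      exact ((sum_cont S).tendsto _).comp this
    have hev_sum : ∀ᶠ k in atTop, ∑ i, g k i < r := by
      have := hgsum (isOpen_Iio.mem_nhds hesum_lt)
      filter_upwards [this] with k hk
      exact hk
    have hev_pos : ∀ᶠ k in atTop, ∀ i, 0 ≤ g k i := by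
      apply Filter.eventually_all.2
      intro i
      rcases eq_or_lt_of_le (hcirep.1 i) with h0 | h0
      · filter_upwards with k
        simp only [hgdef, Pi.add_apply, Pi.sub_apply, ← h0, sub_zero]
        exact add_nonneg (he0 i) ((hcrep (ψ k)).1 i)
      · have hei : 0 < e i := by
          have := hd.1 i
          simp only [hedef, Pi.add_apply, Pi.smul_apply, smul_eq_mul]
          nlinarith
        have hgl : Tendsto (fun k => g k i) atTop (𝓝 (e i)) := by
          have : Tendsto (fun k => e i + (cmin (ψ k) i - ci i)) atTop
              (𝓝 (e i + (ci i - ci i))) :=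
            tendsto_const_nhds.add (((tendsto_pi_nhds.1 hclim) i).sub tendsto_const_nhds)
          simpa [hgdef] using this
        have := hgl (isOpen_Ioi.mem_nhds hei)
        filter_upwards [this] with k hk
        exact le_of_lt hk
    obtain ⟨k, hk1, hk2⟩ := (hev_sum.and hev_pos).exists
    have : r ≤ ∑ i, g k i := (hy (ψ k)).2 (g k) ⟨hk2, hgphi k⟩
    linarith

end Statement2Aux

open Statement2Aux in
theorem statement2 (N : ℕ) (S : Finset (Fin N → ℝ)) (r : ℝ) (hr : 0 < r) :
    ∃ V : Set (Fin N → ℝ), IsOpen V ∧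
      {x : Fin N → ℝ | ∃ (a : ℝ) (δ : Fin N → ℝ),
          0 ≤ a ∧ a < r ∧ δ ∈ convexHull ℝ (S : Set (Fin N → ℝ)) ∧ x = a • δ}
        = V ∩ {x : Fin N → ℝ | ∃ (a : ℝ) (δ : Fin N → ℝ),
            0 ≤ a ∧ δ ∈ convexHull ℝ (S : Set (Fin N → ℝ)) ∧ x = a • δ} := by
  classical
  rcases S.eq_empty_or_nonempty with hS | hS
  · refine ⟨Set.univ, isOpen_univ, ?_⟩
    subst hS
    simp [convexHull_empty]
  · set T := {y : Fin N → ℝ | (∃ c, IsRep S y c) ∧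
      ∀ c, IsRep S y c → r ≤ ∑ i, c i} with hTdef
    refine ⟨Tᶜ, (isClosed_T S r hr).isOpen_compl, ?_⟩
    rw [setA_eq S hS r hr, setD_eq S hS]
    ext x
    simp only [Set.mem_inter_iff, Set.mem_compl_iff, Set.mem_setOf_eq, hTdef]
    constructor
    · rintro ⟨c, hc, hcr⟩
      refine ⟨?_, ⟨c, hc⟩⟩
      intro ⟨_, hall⟩
      exact absurd (hall c hc) (not_le.2 hcr)
    · rintro ⟨hnT, c, hc⟩
      by_contra hno
      push_neg at hno
      exact hnT ⟨⟨c, hc⟩, hno⟩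
end

section
/- The map ℝ³ × ℝ³ → ℝ³ given by (q, p) ↦ q × p (the cross product) is not an open map. -/
theorem statement6 :
    ¬ IsOpenMap (fun qp : (Fin 3 → ℝ) × (Fin 3 → ℝ) => crossProduct qp.1 qp.2) := by
  intro h
  set e : Fin 3 → ℝ := ![1, 0, 0] with he
  have hU : IsOpen (Metric.ball e (1/6) ×ˢ Metric.ball e (1/6)) :=
    (Metric.isOpen_ball).prod Metric.isOpen_ball
  have himg := h _ hU
  have h0 : (fun qp : (Fin 3 → ℝ) × (Fin 3 → ℝ) => crossProduct qp.1 qp.2) (e, e) ∈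
      (fun qp : (Fin 3 → ℝ) × (Fin 3 → ℝ) => crossProduct qp.1 qp.2) ''
      (Metric.ball e (1/6) ×ˢ Metric.ball e (1/6)) := by
    exact Set.mem_image_of_mem _ (by constructor <;> simp)
  have hcross0 : crossProduct e e = 0 := by
    ext i
    fin_cases i <;> simp [he, crossProduct]
  simp only [hcross0] at h0
  obtain ⟨δ, hδ, hball⟩ := Metric.isOpen_iff.mp himg 0 h0
  set v : Fin 3 → ℝ := ![δ/2, 0, 0] with hv
  have hvmem : v ∈ Metric.ball (0 : Fin 3 → ℝ) δ := by
    rw [Metric.mem_ball, dist_zero_right]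
    rw [pi_norm_lt_iff hδ]
    intro i
    fin_cases i <;> simp [hv, abs_of_nonneg hδ.le] <;> linarith
  obtain ⟨⟨q, p⟩, hmem, hqp⟩ := hball hvmem
  obtain ⟨hq, -⟩ := hmem
  simp only at hqp
  have horth : dotProduct q (crossProduct q p) = 0 := dot_self_cross q p
  rw [hqp] at horth
  have hdot : dotProduct q v = q 0 * (δ/2) := by
    simp [hv, dotProduct, Fin.sum_univ_three]
  have hq0 : q 0 = 0 := by
    rw [hdot] at horth
    have : δ/2 ≠ 0 := by positivity
    exact (mul_eq_zero.mp horth).resolve_right this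
  have hclose : |q 0 - e 0| < 1/6 := by
    calc |q 0 - e 0| = dist (q 0) (e 0) := by rw [Real.dist_eq]
    _ ≤ dist q e := dist_le_pi_dist q e 0
    _ < 1/6 := Metric.mem_ball.mp hq
  rw [hq0] at hclose
  simp [he] at hclose
  linarith [hclose]
end

section
/- Let Γ : Fin N → ℝ. The momentum map Φ = (Φ_ℂ, Φ_ℝ) : ℂ^N → ℂ × ℝ is equivariant with respect to the standard coadjoint action of SE(2), i.e. for all θ ∈ ℝ, w ∈ ℂ and z : Fin N → ℂ one has Φ_ℂ(λk, e^{iθ}·zₖ + w) = e^{iθ}·Φ_ℂ(z) and Φ_ℝ(λk, e^{iθ}·zₖ + w) = Φ_ℝ(z) + Im( conj(w)·e^{iθ}·Φ_ℂ(z) ), if and only if ∑ₖ Γₖ = 0. -/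
theorem statement8 (N : ℕ) (Γ : Fin N → ℝ) :
    (∀ (θ : ℝ) (w : ℂ) (z : Fin N → ℂ),
        Complex.I * ∑ k, (Γ k : ℂ) * (Complex.exp (θ * Complex.I) * z k + w)
          = Complex.exp (θ * Complex.I) * (Complex.I * ∑ k, (Γ k : ℂ) * z k) ∧
        ∑ k, Γ k * ‖Complex.exp (θ * Complex.I) * z k + w‖ ^ 2 / 2
          = ∑ k, Γ k * ‖z k‖ ^ 2 / 2
            + ((starRingEnd ℂ) w * (Complex.exp (θ * Complex.I)
                * (Complex.I * ∑ k, (Γ k : ℂ) * z k))).im)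
      ↔ ∑ k, Γ k = 0 := by
  constructor
  · intro h
    have h1 := (h 0 1 0).1
    simp at h1
    exact_mod_cast h1
  · intro hΓ θ w z
    set e := Complex.exp (θ * Complex.I) with he
    have hc : (∑ k, (Γ k : ℂ)) = 0 := by
      have := congrArg (Complex.ofReal) hΓ
      push_cast at this
      simpa using this
    have habse : ‖e‖ = 1 := by
      rw [he]; exact Complex.norm_exp_ofReal_mul_I θ
    constructor
    · have h1 : ∑ k, (Γ k : ℂ) * (e * z k + w)
          = e * ∑ k, (Γ k : ℂ) * z k + (∑ k, (Γ k : ℂ)) * w := by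
        rw [Finset.mul_sum, Finset.sum_mul, ← Finset.sum_add_distrib]
        exact Finset.sum_congr rfl fun k _ => by ring
      rw [h1, hc, zero_mul, add_zero]; ring
    · set S := ∑ k, (Γ k : ℂ) * z k with hS
      have him : ((starRingEnd ℂ) w * (e * (Complex.I * S))).im
          = ((starRingEnd ℂ) w * (e * S)).re := by
        have h2 : (starRingEnd ℂ) w * (e * (Complex.I * S))
            = Complex.I * ((starRingEnd ℂ) w * (e * S)) := by ring
        rw [h2, Complex.mul_im]; simp
      have habs : ∀ k, ‖e * z k + w‖ ^ 2
          = ‖z k‖ ^ 2 + ‖w‖ ^ 2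
            + 2 * ((starRingEnd ℂ) w * (e * z k)).re := by
        intro k
        rw [Complex.sq_norm, Complex.normSq_add, ← Complex.sq_norm, ← Complex.sq_norm,
          norm_mul, habse, one_mul, mul_comm (e * z k)]
      have hre : ((starRingEnd ℂ) w * (e * S)).re
          = ∑ k, Γ k * ((starRingEnd ℂ) w * (e * z k)).re := by
        have h3 : (starRingEnd ℂ) w * (e * S)
            = ∑ k, (Γ k : ℂ) * ((starRingEnd ℂ) w * (e * z k)) := by
          rw [hS, Finset.mul_sum, Finset.mul_sum]
          exact Finset.sum_congr rfl fun k _ => by ring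
        rw [h3, Complex.re_sum]
        exact Finset.sum_congr rfl fun k _ => by
          simp [Complex.mul_re]
      rw [him, hre]
      calc ∑ k, Γ k * ‖e * z k + w‖ ^ 2 / 2
          = ∑ k, (Γ k * ‖z k‖ ^ 2 / 2 + Γ k * (‖w‖ ^ 2 / 2)
              + Γ k * ((starRingEnd ℂ) w * (e * z k)).re) :=
            Finset.sum_congr rfl fun k _ => by rw [habs k]; ring
        _ = ∑ k, Γ k * ‖z k‖ ^ 2 / 2 + (∑ k, Γ k) * (‖w‖ ^ 2 / 2)
              + ∑ k, Γ k * ((starRingEnd ℂ) w * (e * z k)).re := by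
            rw [Finset.sum_add_distrib, Finset.sum_add_distrib, ← Finset.sum_mul]
        _ = ∑ k, Γ k * ‖z k‖ ^ 2 / 2
              + ∑ k, Γ k * ((starRingEnd ℂ) w * (e * z k)).re := by
            rw [hΓ, zero_mul, add_zero]
end

section
/- Let z₁, z₂, z₃ ∈ ℂ with z₁ ≠ z₃ form an equilateral configuration, i.e. z₂ − z₃ = e^{iπ/3}(z₁ − z₃) or z₂ − z₃ = e^{−iπ/3}(z₁ − z₃). Then exp(2π·h) = |Φ_ℂ|³ / (3·√3), where h and Φ_ℂ are evaluated at (z₁, z₂, z₃). Equivalently, |z₁−z₃|²·|z₂−z₃|² / |z₁−z₂| = |z₁ + z₂ − 2z₃|³ / (3√3). -/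
lemma abs_one_sub : ‖1 - ((1/2 : ℝ) + (Real.sqrt 3 / 2 : ℝ) * Complex.I)‖ = 1 := by
  have : (1 : ℂ) - (((1:ℝ)/2 : ℝ) + ((Real.sqrt 3 / 2 : ℝ)) * Complex.I)
      = ((1/2 : ℝ) : ℂ) + ((-(Real.sqrt 3 / 2) : ℝ) : ℂ) * Complex.I := by
    push_cast; ring
  rw [this, Complex.norm_add_mul_I]
  have h3 : Real.sqrt 3 ^ 2 = 3 := Real.sq_sqrt (by norm_num)
  rw [show ((1:ℝ)/2)^2 + (-(Real.sqrt 3/2))^2 = 1 by nlinarith]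
  exact Real.sqrt_one

lemma abs_one_add : ‖1 + ((1/2 : ℝ) + (Real.sqrt 3 / 2 : ℝ) * Complex.I)‖ = Real.sqrt 3 := by
  have : (1 : ℂ) + (((1:ℝ)/2 : ℝ) + ((Real.sqrt 3 / 2 : ℝ)) * Complex.I)
      = ((3/2 : ℝ) : ℂ) + (((Real.sqrt 3 / 2) : ℝ) : ℂ) * Complex.I := by
    push_cast; ring
  rw [this, Complex.norm_add_mul_I]
  have h3 : Real.sqrt 3 ^ 2 = 3 := Real.sq_sqrt (by norm_num)
  rw [show ((3:ℝ)/2)^2 + ((Real.sqrt 3/2))^2 = 3 by nlinarith]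

theorem statement9 (z₁ z₂ z₃ : ℂ) (h13 : z₁ ≠ z₃)
    (heq : z₂ - z₃ = Complex.exp (Real.pi / 3 * Complex.I) * (z₁ - z₃) ∨
           z₂ - z₃ = Complex.exp (-(Real.pi / 3) * Complex.I) * (z₁ - z₃)) :
    Real.exp (2 * Real.pi * (-(1 / (2 * Real.pi)) *
        (Real.log (‖z₁ - z₂‖) - 2 * Real.log (‖z₁ - z₃‖)
          - 2 * Real.log (‖z₂ - z₃‖))))
      = ‖Complex.I * (z₁ + z₂ - 2 * z₃)‖ ^ 3 / (3 * Real.sqrt 3) ∧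
    ‖z₁ - z₃‖ ^ 2 * ‖z₂ - z₃‖ ^ 2 / ‖z₁ - z₂‖
      = ‖z₁ + z₂ - 2 * z₃‖ ^ 3 / (3 * Real.sqrt 3) := by
  set w : ℂ := z₁ - z₃ with hw
  have hwne : w ≠ 0 := sub_ne_zero.mpr h13
  set a : ℝ := ‖w‖ with ha
  have hapos : 0 < a := by simpa [ha] using (norm_pos_iff.mpr hwne)
  -- compute abs values
  have key : ‖z₂ - z₃‖ = a ∧ ‖z₁ - z₂‖ = a ∧
      ‖z₁ + z₂ - 2 * z₃‖ = Real.sqrt 3 * a := by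
    rcases heq with h | h
    · have he : Complex.exp (Real.pi / 3 * Complex.I)
          = ((1/2 : ℝ) + (Real.sqrt 3 / 2 : ℝ) * Complex.I) := by
        rw [show ((Real.pi : ℂ) / 3 * Complex.I) = ((Real.pi/3 : ℝ) : ℂ) * Complex.I by
          push_cast; ring, Complex.exp_mul_I, ← Complex.ofReal_cos, ← Complex.ofReal_sin,
          Real.cos_pi_div_three, Real.sin_pi_div_three]
      set e : ℂ := ((1/2 : ℝ) + (Real.sqrt 3 / 2 : ℝ) * Complex.I) with hee
      rw [he] at h
      have habe : ‖e‖ = 1 := by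
        have := abs_one_sub
        rw [hee, Complex.norm_add_mul_I]
        have h3 : Real.sqrt 3 ^ 2 = 3 := Real.sq_sqrt (by norm_num)
        have hx : ((1:ℝ)/2)^2 + ((Real.sqrt 3/2))^2 = 1 := by nlinarith [h3]
        rw [hx]
        exact Real.sqrt_one
      refine ⟨?_, ?_, ?_⟩
      · rw [h, norm_mul, habe, one_mul]
      · have : z₁ - z₂ = (1 - e) * w := by rw [hw]; rw [sub_eq_iff_eq_add] at h; rw [h]; ring
        rw [this, norm_mul, abs_one_sub, one_mul]
      · have : z₁ + z₂ - 2 * z₃ = (1 + e) * w := by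
          rw [hw]; rw [sub_eq_iff_eq_add] at h; rw [h]; ring
        rw [this, norm_mul, abs_one_add]
    · have he : Complex.exp (-(Real.pi / 3) * Complex.I)
          = ((1/2 : ℝ) + (-(Real.sqrt 3 / 2) : ℝ) * Complex.I) := by
        rw [show (-((Real.pi : ℂ) / 3) * Complex.I) = ((-(Real.pi/3) : ℝ) : ℂ) * Complex.I by
          push_cast; ring, Complex.exp_mul_I, ← Complex.ofReal_cos, ← Complex.ofReal_sin,
          Real.cos_neg, Real.sin_neg, Real.cos_pi_div_three, Real.sin_pi_div_three]
      set e : ℂ := ((1/2 : ℝ) + (-(Real.sqrt 3 / 2) : ℝ) * Complex.I) with hee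
      rw [he] at h
      have h3 : Real.sqrt 3 ^ 2 = 3 := Real.sq_sqrt (by norm_num)
      have habe : ‖e‖ = 1 := by
        rw [hee, Complex.norm_add_mul_I]
        have hx : ((1:ℝ)/2)^2 + ((-(Real.sqrt 3/2)))^2 = 1 := by nlinarith [h3]
        rw [hx]
        exact Real.sqrt_one
      have habs : ‖1 - e‖ = 1 := by
        have : (1 : ℂ) - e = ((1/2 : ℝ) : ℂ) + ((Real.sqrt 3 / 2 : ℝ) : ℂ) * Complex.I := by
          rw [hee]; push_cast; ring
        rw [this, Complex.norm_add_mul_I,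
          show ((1:ℝ)/2)^2 + ((Real.sqrt 3/2))^2 = 1 by nlinarith]
        exact Real.sqrt_one
      have haba : ‖1 + e‖ = Real.sqrt 3 := by
        have : (1 : ℂ) + e = ((3/2 : ℝ) : ℂ) + ((-(Real.sqrt 3 / 2) : ℝ) : ℂ) * Complex.I := by
          rw [hee]; push_cast; ring
        rw [this, Complex.norm_add_mul_I,
          show ((3:ℝ)/2)^2 + ((-(Real.sqrt 3/2)))^2 = 3 by nlinarith]
      refine ⟨?_, ?_, ?_⟩
      · rw [h, norm_mul, habe, one_mul]
      · have : z₁ - z₂ = (1 - e) * w := by rw [hw]; rw [sub_eq_iff_eq_add] at h; rw [h]; ring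
        rw [this, norm_mul, habs, one_mul]
      · have : z₁ + z₂ - 2 * z₃ = (1 + e) * w := by
          rw [hw]; rw [sub_eq_iff_eq_add] at h; rw [h]; ring
        rw [this, norm_mul, haba]
  obtain ⟨h23, h12, hΦ⟩ := key
  have h3 : Real.sqrt 3 ^ 2 = 3 := Real.sq_sqrt (by norm_num)
  have h3pos : (0:ℝ) < Real.sqrt 3 := Real.sqrt_pos.mpr (by norm_num)
  have hrhs : (Real.sqrt 3 * a) ^ 3 / (3 * Real.sqrt 3) = a ^ 3 := by
    rw [mul_pow, pow_succ, h3]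
    field_simp
  have hπ : Real.pi ≠ 0 := Real.pi_ne_zero
  constructor
  · rw [h23, h12]
    rw [show (2 * Real.pi * (-(1 / (2 * Real.pi)) *
        (Real.log a - 2 * Real.log a - 2 * Real.log a)))
        = Real.log a + Real.log a + Real.log a by field_simp; ring]
    rw [Real.exp_add, Real.exp_add, Real.exp_log hapos]
    rw [norm_mul, Complex.norm_I, one_mul, hΦ, hrhs]; ring
  · rw [h23, h12, hΦ, hrhs]
    field_simp
end

section
/- Let E > 0, and let z₁, z₂, z₃ ∈ ℂ with z₁ ≠ z₃ form an equilateral configuration, i.e. z₂ − z₃ = e^{iπ/3}(z₁ − z₃) or z₂ − z₃ = e^{−iπ/3}(z₁ − z₃). If |Φ_ℂ| < (√3·E)^{1/3}, where Φ_ℂ is evaluated at (z₁, z₂, z₃), then exp(2π·h) < E/3, where h is evaluated at (z₁, z₂, z₃). (Hence no equilateral relative equilibrium with momentum in the punctured neighbourhood V of Proposition 7.1 can lie in the sublevel set U.) -/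
theorem statement10 (E : ℝ) (hE : 0 < E) (z₁ z₂ z₃ : ℂ) (h13 : z₁ ≠ z₃)
    (heq : z₂ - z₃ = Complex.exp (Real.pi / 3 * Complex.I) * (z₁ - z₃) ∨
           z₂ - z₃ = Complex.exp (-(Real.pi / 3) * Complex.I) * (z₁ - z₃))
    (hmom : ‖Complex.I * (z₁ + z₂ - 2 * z₃)‖
      < (Real.sqrt 3 * E) ^ ((1 : ℝ) / 3)) :
    Real.exp (2 * Real.pi * (-(1 / (2 * Real.pi)) *
        (Real.log (‖z₁ - z₂‖) - 2 * Real.log (‖z₁ - z₃‖)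
          - 2 * Real.log (‖z₂ - z₃‖))))
      < E / 3 := by
  set r : ℝ := ‖z₁ - z₃‖ with hrdef
  have hr : 0 < r := by
    simpa [hrdef, sub_eq_zero] using h13
  -- express the exponential factor
  obtain ⟨ε, hε, hcos, hsin2⟩ :
      ∃ ε : ℂ, z₂ - z₃ = ε * (z₁ - z₃) ∧ ε.re = 1/2 ∧ ε.im ^ 2 = 3/4 := by
    rcases heq with h | h
    · refine ⟨_, h, ?_, ?_⟩
      · rw [show (Real.pi / 3 : ℂ) * Complex.I = (Real.pi/3 : ℝ) * Complex.I by push_cast; ring,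
          Complex.exp_ofReal_mul_I_re, Real.cos_pi_div_three]
      · rw [show (Real.pi / 3 : ℂ) * Complex.I = (Real.pi/3 : ℝ) * Complex.I by push_cast; ring,
          Complex.exp_ofReal_mul_I_im, Real.sin_pi_div_three, div_pow,
          Real.sq_sqrt (by norm_num : (0:ℝ) ≤ 3)]
        norm_num
    · refine ⟨_, h, ?_, ?_⟩
      · rw [show (-(Real.pi / 3) : ℂ) * Complex.I = ((-(Real.pi/3)) : ℝ) * Complex.I by push_cast; ring,
          Complex.exp_ofReal_mul_I_re, Real.cos_neg, Real.cos_pi_div_three]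
      · rw [show (-(Real.pi / 3) : ℂ) * Complex.I = ((-(Real.pi/3)) : ℝ) * Complex.I by push_cast; ring,
          Complex.exp_ofReal_mul_I_im, Real.sin_neg, Real.sin_pi_div_three, neg_pow, div_pow,
          Real.sq_sqrt (by norm_num : (0:ℝ) ≤ 3)]
        norm_num
  have habsε : ‖ε‖ = 1 := by
    have : Complex.normSq ε = 1 := by
      rw [Complex.normSq_apply]
      nlinarith [hcos, hsin2]
    rw [Complex.norm_def, this, Real.sqrt_one]
  have h23 : ‖z₂ - z₃‖ = r := by
    rw [hε, norm_mul, habsε, one_mul]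
  have h12 : ‖z₁ - z₂‖ = r := by
    have : z₁ - z₂ = (1 - ε) * (z₁ - z₃) := by
      have : z₁ - z₂ = (z₁ - z₃) - (z₂ - z₃) := by ring
      rw [this, hε]; ring
    rw [this, norm_mul]
    have : ‖1 - ε‖ = 1 := by
      have : Complex.normSq (1 - ε) = 1 := by
        simp [Complex.normSq_apply, Complex.sub_re, Complex.sub_im]
        nlinarith [hcos, hsin2]
      rw [Complex.norm_def, this, Real.sqrt_one]
    rw [this, one_mul]
  have hmomval : ‖Complex.I * (z₁ + z₂ - 2 * z₃)‖ = Real.sqrt 3 * r := by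
    have h1 : z₁ + z₂ - 2 * z₃ = (1 + ε) * (z₁ - z₃) := by
      have : z₁ + z₂ - 2 * z₃ = (z₁ - z₃) + (z₂ - z₃) := by ring
      rw [this, hε]; ring
    rw [norm_mul, Complex.norm_I, one_mul, h1, norm_mul]
    congr 1
    have hn : Complex.normSq (1 + ε) = 3 := by
      simp [Complex.normSq_apply, Complex.add_re, Complex.add_im]
      nlinarith [hcos, hsin2]
    rw [Complex.norm_def, hn]
  -- from the momentum bound, deduce r ^ 3 < E / 3
  have hs3 : (0:ℝ) < Real.sqrt 3 := Real.sqrt_pos.mpr (by norm_num)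
  have hcube : (Real.sqrt 3 * r) ^ 3 < Real.sqrt 3 * E := by
    have hb := hmom
    rw [hmomval] at hb
    have h3 : ((Real.sqrt 3 * E) ^ ((1:ℝ)/3)) ^ (3:ℕ) = Real.sqrt 3 * E := by
      rw [← Real.rpow_natCast ((Real.sqrt 3 * E) ^ ((1:ℝ)/3)) 3,
        ← Real.rpow_mul (by positivity)]
      norm_num
    calc (Real.sqrt 3 * r) ^ 3
        < ((Real.sqrt 3 * E) ^ ((1:ℝ)/3)) ^ (3:ℕ) := by
          exact pow_lt_pow_left₀ hb (by positivity) (by norm_num)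
      _ = Real.sqrt 3 * E := h3
  have hr3 : r ^ 3 < E / 3 := by
    have hexp : (Real.sqrt 3 * r) ^ 3 = Real.sqrt 3 * (3 * r ^ 3) := by
      have : Real.sqrt 3 ^ 3 = Real.sqrt 3 * 3 := by
        have : Real.sqrt 3 ^ 2 = 3 := Real.sq_sqrt (by norm_num)
        nlinarith [this]
      rw [mul_pow, this]; ring
    rw [hexp] at hcube
    have := (mul_lt_mul_iff_right₀ hs3).mp hcube
    linarith
  -- compute the exponential
  have hπ : Real.pi ≠ 0 := Real.pi_ne_zero
  have harg : 2 * Real.pi * (-(1 / (2 * Real.pi)) *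
      (Real.log (‖z₁ - z₂‖) - 2 * Real.log r
        - 2 * Real.log (‖z₂ - z₃‖))) = 3 * Real.log r := by
    rw [h12, h23]
    field_simp
    ring
  rw [harg, show (3:ℝ) * Real.log r = Real.log (r ^ 3) by rw [Real.log_pow]; push_cast; ring,
    Real.exp_log (by positivity)]
  exact hr3
end

section
/- Let r > 0. Suppose z₁, z₂, z₃ ∈ ℂ and w₁, w₂, w₃ ∈ ℂ both satisfy Φ_ℂ = 0 and Φ_ℝ = r (i.e. z₁ + z₂ − 2z₃ = 0 and (|z₁|² + |z₂|² − 2|z₃|²)/2 = r, and the same for w). Then the two configurations lie on the same SE(2)-orbit: there exist θ ∈ ℝ and c ∈ ℂ such that wₖ = e^{iθ}·zₖ + c for k = 1, 2, 3. (Hence the reduced space Φ⁻¹(0, r)/SE(2) is a single point.) -/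
theorem statement11 (r : ℝ) (hr : 0 < r) (z₁ z₂ z₃ w₁ w₂ w₃ : ℂ)
    (hzC : Complex.I * (z₁ + z₂ - 2 * z₃) = 0)
    (hzR : (‖z₁‖ ^ 2 + ‖z₂‖ ^ 2 - 2 * ‖z₃‖ ^ 2) / 2 = r)
    (hwC : Complex.I * (w₁ + w₂ - 2 * w₃) = 0)
    (hwR : (‖w₁‖ ^ 2 + ‖w₂‖ ^ 2 - 2 * ‖w₃‖ ^ 2) / 2 = r) :
    ∃ (θ : ℝ) (c : ℂ),
      w₁ = Complex.exp (θ * Complex.I) * z₁ + c ∧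
      w₂ = Complex.exp (θ * Complex.I) * z₂ + c ∧
      w₃ = Complex.exp (θ * Complex.I) * z₃ + c := by
  have hz : z₁ + z₂ - 2 * z₃ = 0 := by
    rcases mul_eq_zero.mp hzC with h | h
    · exact absurd h Complex.I_ne_zero
    · exact h
  have hw : w₁ + w₂ - 2 * w₃ = 0 := by
    rcases mul_eq_zero.mp hwC with h | h
    · exact absurd h Complex.I_ne_zero
    · exact h
  set u : ℂ := (z₁ - z₂) / 2 with hu_def
  set v : ℂ := (w₁ - w₂) / 2 with hv_def
  have hz1 : z₁ = z₃ + u := by rw [hu_def]; linear_combination hz / 2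
  have hz2 : z₂ = z₃ - u := by rw [hu_def]; linear_combination hz / 2
  have hw1 : w₁ = w₃ + v := by rw [hv_def]; linear_combination hw / 2
  have hw2 : w₂ = w₃ - v := by rw [hv_def]; linear_combination hw / 2
  have hnu : Complex.normSq u = r := by
    have := hzR
    rw [Complex.sq_norm, Complex.sq_norm, Complex.sq_norm, hz1, hz2] at this
    simp only [Complex.normSq_apply, Complex.add_re, Complex.add_im, Complex.sub_re,
      Complex.sub_im] at this ⊢
    nlinarith [this]
  have hnv : Complex.normSq v = r := by
    have := hwR
    rw [Complex.sq_norm, Complex.sq_norm, Complex.sq_norm, hw1, hw2] at this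
    simp only [Complex.normSq_apply, Complex.add_re, Complex.add_im, Complex.sub_re,
      Complex.sub_im] at this ⊢
    nlinarith [this]
  have hu0 : u ≠ 0 := by
    intro h
    rw [h, Complex.normSq_zero] at hnu
    linarith
  set x : ℂ := v / u with hx_def
  have hax : ‖x‖ = 1 := by
    rw [hx_def, norm_div]
    have h1 : ‖v‖ = Real.sqrt r := by
      rw [← Real.sqrt_sq (norm_nonneg v), Complex.sq_norm, hnv]
    have h2 : ‖u‖ = Real.sqrt r := by
      rw [← Real.sqrt_sq (norm_nonneg u), Complex.sq_norm, hnu]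
    rw [h1, h2, div_self]
    positivity
  have hexp : Complex.exp (x.arg * Complex.I) = x := by
    have := Complex.norm_mul_exp_arg_mul_I x
    rw [hax] at this
    simpa using this
  have hxu : x * u = v := div_mul_cancel₀ v hu0
  refine ⟨x.arg, w₃ - x * z₃, ?_, ?_, ?_⟩ <;> rw [hexp]
  · linear_combination hw1 - x * hz1 - hxu
  · linear_combination hw2 - x * hz2 + hxu
  · ring
end

section
/- Let Γ : Fin N → ℝ and let z : ℝ → Fin N → ℂ be a solution of the N-vortex equations: for every t ∈ ℝ the points z(t)₁, …, z(t)_N are pairwise distinct, and for every k and t the function s ↦ z(s)ₖ has derivative at t equal to −(1/(2πi))·∑_{l ≠ k} Γₗ / ( conj(z(t)ₖ) − conj(z(t)ₗ) ). Then the function t ↦ ∑ₖ Γₖ·z(t)ₖ is constant; in particular Φ_ℂ is a conserved quantity of the vortex flow. -/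
theorem statement12 (N : ℕ) (Γ : Fin N → ℝ) (z : ℝ → Fin N → ℂ)
    (hdist : ∀ (t : ℝ) (k l : Fin N), k ≠ l → z t k ≠ z t l)
    (hode : ∀ (k : Fin N) (t : ℝ),
      HasDerivAt (fun s => z s k)
        (-(1 / (2 * (Real.pi : ℂ) * Complex.I)) *
          ∑ l ∈ Finset.univ.erase k,
            (Γ l : ℂ) / ((starRingEnd ℂ) (z t k) - (starRingEnd ℂ) (z t l))) t) :
    ∀ t s : ℝ, ∑ k, (Γ k : ℂ) * z t k = ∑ k, (Γ k : ℂ) * z s k := by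
  have key : ∀ t : ℝ, HasDerivAt (fun s => ∑ k, (Γ k : ℂ) * z s k) 0 t := by
    intro t
    set w : Fin N → ℂ := fun k => (starRingEnd ℂ) (z t k) with hw
    have h1 : HasDerivAt (fun s => ∑ k, (Γ k : ℂ) * z s k)
        (∑ k, (Γ k : ℂ) * (-(1 / (2 * (Real.pi : ℂ) * Complex.I)) *
          ∑ l ∈ Finset.univ.erase k, (Γ l : ℂ) / (w k - w l))) t := by
      apply HasDerivAt.fun_sum
      intro k _
      exact (hode k t).const_mul _
    have hS : (∑ k, (Γ k : ℂ) * (-(1 / (2 * (Real.pi : ℂ) * Complex.I)) *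
        ∑ l ∈ Finset.univ.erase k, (Γ l : ℂ) / (w k - w l))) = 0 := by
      have : (∑ k, (Γ k : ℂ) * (-(1 / (2 * (Real.pi : ℂ) * Complex.I)) *
          ∑ l ∈ Finset.univ.erase k, (Γ l : ℂ) / (w k - w l)))
          = -(1 / (2 * (Real.pi : ℂ) * Complex.I)) *
            ∑ k, ∑ l ∈ Finset.univ.erase k, (Γ k : ℂ) * (Γ l : ℂ) / (w k - w l) := by
        rw [Finset.mul_sum]
        apply Finset.sum_congr rfl
        intro k _
        rw [Finset.mul_sum, Finset.mul_sum, Finset.mul_sum]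
        apply Finset.sum_congr rfl
        intro l _
        ring
      rw [this]
      have hzero : (∑ k, ∑ l ∈ Finset.univ.erase k,
          (Γ k : ℂ) * (Γ l : ℂ) / (w k - w l)) = 0 := by
        set S := ∑ k, ∑ l ∈ Finset.univ.erase k, (Γ k : ℂ) * (Γ l : ℂ) / (w k - w l) with hSdef
        have hswap : S = ∑ k, ∑ l ∈ Finset.univ.erase k,
            (Γ l : ℂ) * (Γ k : ℂ) / (w l - w k) := by
          rw [hSdef]
          rw [Finset.sum_comm' (s' := fun l => Finset.univ.erase l) (t' := Finset.univ)]
          intro x y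
          simp [Finset.mem_erase, eq_comm, and_comm]
        have hSS : S + S = 0 := by
          nth_rewrite 2 [hswap]
          rw [← Finset.sum_add_distrib]
          apply Finset.sum_eq_zero
          intro k _
          rw [← Finset.sum_add_distrib]
          apply Finset.sum_eq_zero
          intro l _
          have : w l - w k = -(w k - w l) := by ring
          rw [this, div_neg]
          ring
        have := hSS
        linear_combination (this) / 2
      rw [hzero, mul_zero]
    rw [hS] at h1
    exact h1
  intro t s
  have hdiff : Differentiable ℝ (fun s => ∑ k, (Γ k : ℂ) * z s k) :=
    fun x => (key x).differentiableAt
  have hderiv : ∀ x, deriv (fun s => ∑ k, (Γ k : ℂ) * z s k) x = 0 :=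
    fun x => (key x).deriv
  exact is_const_of_deriv_eq_zero hdiff hderiv t s
end

section
/- Let Γ : Fin N → ℝ and let z : ℝ → Fin N → ℂ be a solution of the N-vortex equations: for every t ∈ ℝ the points z(t)₁, …, z(t)_N are pairwise distinct, and for every k and t the function s ↦ z(s)ₖ has derivative at t equal to −(1/(2πi))·∑_{l ≠ k} Γₗ / ( conj(z(t)ₖ) − conj(z(t)ₗ) ). Then the function t ↦ ∑ₖ Γₖ·|z(t)ₖ|²/2 is constant; in particular Φ_ℝ is a conserved quantity of the vortex flow. -/
theorem statement13 (N : ℕ) (Γ : Fin N → ℝ) (z : ℝ → Fin N → ℂ)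
    (hdist : ∀ (t : ℝ) (k l : Fin N), k ≠ l → z t k ≠ z t l)
    (hode : ∀ (k : Fin N) (t : ℝ),
      HasDerivAt (fun s => z s k)
        (-(1 / (2 * (Real.pi : ℂ) * Complex.I)) *
          ∑ l ∈ Finset.univ.erase k,
            (Γ l : ℂ) / ((starRingEnd ℂ) (z t k) - (starRingEnd ℂ) (z t l))) t) :
    ∀ t s : ℝ, ∑ k, Γ k * ‖z t k‖ ^ 2 / 2
      = ∑ k, Γ k * ‖z s k‖ ^ 2 / 2 := by
  classical
  set c : ℂ := -(1 / (2 * (Real.pi : ℂ) * Complex.I)) with hcdef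
  have hcre : c.re = 0 := by
    simp [hcdef, Complex.div_re]
  have key : ∀ t : ℝ, HasDerivAt (fun s => ∑ k, Γ k * ‖z s k‖ ^ 2 / 2) 0 t := by
    intro t
    set a : Fin N → ℂ := fun k => (starRingEnd ℂ) (z t k) with ha
    set v : Fin N → ℂ := fun k =>
      c * ∑ l ∈ Finset.univ.erase k, (Γ l : ℂ) / (a k - a l) with hv
    have hderiv : ∀ k, HasDerivAt (fun s => Γ k * ‖z s k‖ ^ 2 / 2)
        (Γ k * (v k * a k).re) t := by
      intro k
      have hz : HasDerivAt (fun s => z s k) (v k) t := hode k t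
      have hst : HasDerivAt (fun s => (starRingEnd ℂ) (z s k)) ((starRingEnd ℂ) (v k)) t :=
        hz.star
      have hmul : HasDerivAt (fun s => z s k * (starRingEnd ℂ) (z s k))
          (v k * (starRingEnd ℂ) (z t k) + z t k * (starRingEnd ℂ) (v k)) t := hz.mul hst
      have hre := (Complex.reCLM.hasFDerivAt.comp_hasDerivAt t hmul).const_mul (Γ k / 2)
      have hre2 : HasDerivAt (fun s => Γ k * ‖z s k‖ ^ 2 / 2)
          (Γ k / 2 * Complex.reCLM
            (v k * (starRingEnd ℂ) (z t k) + z t k * (starRingEnd ℂ) (v k))) t := by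
        refine hre.congr_of_eventuallyEq (Filter.Eventually.of_forall fun s => ?_)
        simp only [Function.comp_apply, Complex.reCLM_apply, Complex.mul_conj,
          Complex.ofReal_re]
        rw [Complex.sq_norm]
        ring
      convert hre2 using 1
      simp only [Complex.reCLM_apply, Complex.add_re]
      have h1 : z t k * (starRingEnd ℂ) (v k)
          = (starRingEnd ℂ) (v k * (starRingEnd ℂ) (z t k)) := by
        conv_rhs => rw [map_mul, Complex.conj_conj]
        rw [mul_comm]
      rw [h1, Complex.conj_re]
      have h2 : a k = (starRingEnd ℂ) (z t k) := rfl
      rw [h2]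
      ring
    have hsum := HasDerivAt.fun_sum (fun k (_ : k ∈ Finset.univ) => hderiv k)
    have hzero : ∑ k, Γ k * (v k * a k).re = 0 := by
      set g : Fin N → Fin N → ℝ := fun k l => Γ k * Γ l * (c * (a k / (a k - a l))).re with hg
      have hterm : ∀ k, Γ k * (v k * a k).re = ∑ l ∈ Finset.univ.erase k, g k l := by
        intro k
        have hva : v k * a k
            = ∑ l ∈ Finset.univ.erase k, (Γ l : ℂ) * (c * (a k / (a k - a l))) := by
          simp only [hv]
          rw [Finset.mul_sum, Finset.sum_mul]
          exact Finset.sum_congr rfl fun l _ => by ring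
        rw [hva, Complex.re_sum, Finset.mul_sum]
        refine Finset.sum_congr rfl fun l _ => ?_
        rw [Complex.re_ofReal_mul, hg]
        ring
      rw [Finset.sum_congr rfl fun k _ => hterm k]
      have hswap : ∑ k, ∑ l ∈ Finset.univ.erase k, g k l
          = ∑ k, ∑ l ∈ Finset.univ.erase k, g l k := by
        rw [Finset.sum_comm' (t' := Finset.univ) (s' := fun l => Finset.univ.erase l)]
        intro x y
        simp [Finset.mem_erase, and_comm, ne_comm, eq_comm]
      have hpair : ∀ k, ∀ l ∈ Finset.univ.erase k, g k l + g l k = 0 := by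
        intro k l hl
        have hkl : k ≠ l := fun h => (Finset.mem_erase.mp hl).1 h.symm
        have hne : a k - a l ≠ 0 :=
          sub_ne_zero.mpr fun h => hdist t k l hkl ((starRingEnd ℂ).injective h)
        have hne' : a l - a k ≠ 0 :=
          sub_ne_zero.mpr (Ne.symm (sub_ne_zero.mp hne))
        have hid : c * (a k / (a k - a l)) + c * (a l / (a l - a k)) = c := by
          field_simp
          ring
        calc g k l + g l k
            = Γ k * Γ l * ((c * (a k / (a k - a l))).re + (c * (a l / (a l - a k))).re) := by
              rw [hg]; ring
          _ = Γ k * Γ l * (c * (a k / (a k - a l)) + c * (a l / (a l - a k))).re := by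
              rw [Complex.add_re]
          _ = Γ k * Γ l * c.re := by rw [hid]
          _ = 0 := by rw [hcre]; ring
      have h2 : (∑ k, ∑ l ∈ Finset.univ.erase k, g k l)
          + (∑ k, ∑ l ∈ Finset.univ.erase k, g l k) = 0 := by
        rw [← Finset.sum_add_distrib]
        refine Finset.sum_eq_zero fun k _ => ?_
        rw [← Finset.sum_add_distrib]
        exact Finset.sum_eq_zero (hpair k)
      rw [← hswap] at h2
      linarith
    rw [hzero] at hsum
    exact hsum
  intro t s
  exact is_const_of_deriv_eq_zero (fun x => (key x).differentiableAt)
    (fun x => (key x).deriv) t s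
end

section
/- Let Γ : Fin N → ℝ and let z : ℝ → Fin N → ℂ be a solution of the N-vortex equations: for every t ∈ ℝ the points z(t)₁, …, z(t)_N are pairwise distinct, and for every k and t the function s ↦ z(s)ₖ has derivative at t equal to −(1/(2πi))·∑_{l ≠ k} Γₗ / ( conj(z(t)ₖ) − conj(z(t)ₗ) ). Then the function t ↦ ∑_{k < l} Γₖ·Γₗ·log|z(t)ₖ − z(t)ₗ| is constant; in particular the Hamiltonian h is conserved along the vortex flow. -/
open Finset Complex
private lemma logAbsDeriv {w : ℝ → ℂ} {w' : ℂ} {t : ℝ} (hw : HasDerivAt w w' t)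
    (h0 : w t ≠ 0) :
    HasDerivAt (fun s => Real.log (‖w s‖)) ((w' / w t).re) t := by
  have hre : HasDerivAt (fun s => (w s).re) w'.re t := by
    simpa [Function.comp_def] using (Complex.reCLM.hasFDerivAt.comp_hasDerivAt t hw)
  have him : HasDerivAt (fun s => (w s).im) w'.im t := by
    simpa [Function.comp_def] using (Complex.imCLM.hasFDerivAt.comp_hasDerivAt t hw)
  have hn : HasDerivAt (fun s => Complex.normSq (w s))
      (w'.re * (w t).re + (w t).re * w'.re + (w'.im * (w t).im + (w t).im * w'.im)) t := by
    simpa [Complex.normSq_apply, Pi.mul_def, Pi.add_def] using (hre.mul hre).add (him.mul him)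
  have hn0 : Complex.normSq (w t) ≠ 0 := by
    simpa [Complex.normSq_eq_zero] using h0
  have hlog := ((Real.hasDerivAt_log hn0).comp t hn).div_const 2
  have heq : (fun s => Real.log (‖w s‖))
      = fun s => Real.log (Complex.normSq (w s)) / 2 := by
    funext s
    rw [Complex.norm_def, Real.log_sqrt (Complex.normSq_nonneg _)]
  rw [heq]
  refine hlog.congr_deriv ?_
  rw [Complex.div_re]
  field_simp
  ring

theorem statement14 (N : ℕ) (Γ : Fin N → ℝ) (z : ℝ → Fin N → ℂ)
    (hdist : ∀ (t : ℝ) (k l : Fin N), k ≠ l → z t k ≠ z t l)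
    (hode : ∀ (k : Fin N) (t : ℝ),
      HasDerivAt (fun s => z s k)
        (-(1 / (2 * (Real.pi : ℂ) * Complex.I)) *
          ∑ l ∈ Finset.univ.erase k,
            (Γ l : ℂ) / ((starRingEnd ℂ) (z t k) - (starRingEnd ℂ) (z t l))) t) :
    ∀ t s : ℝ,
      ∑ p ∈ Finset.univ.filter (fun p : Fin N × Fin N => p.1 < p.2),
          Γ p.1 * Γ p.2 * Real.log (‖z t p.1 - z t p.2‖)
        = ∑ p ∈ Finset.univ.filter (fun p : Fin N × Fin N => p.1 < p.2),
            Γ p.1 * Γ p.2 * Real.log (‖z s p.1 - z s p.2‖) := by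
  set c : ℂ := -(1 / (2 * (Real.pi : ℂ) * Complex.I)) with hc
  set P : Finset (Fin N × Fin N) := Finset.univ.filter (fun p : Fin N × Fin N => p.1 < p.2)
    with hP
  set f : ℝ → ℝ := fun t =>
    ∑ p ∈ P, Γ p.1 * Γ p.2 * Real.log (‖z t p.1 - z t p.2‖) with hf
  have key : ∀ u : ℝ, HasDerivAt f 0 u := by
    intro u
    set v : Fin N → ℂ := fun k => ∑ l ∈ Finset.univ.erase k,
      (Γ l : ℂ) / ((starRingEnd ℂ) (z u k) - (starRingEnd ℂ) (z u l)) with hv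
    set ζ : Fin N → ℂ := fun k => z u k with hζ
    -- derivative of each term
    have hterm : ∀ p ∈ P, HasDerivAt
        (fun r => Γ p.1 * Γ p.2 * Real.log (‖z r p.1 - z r p.2‖))
        (Γ p.1 * Γ p.2 * ((c * v p.1 - c * v p.2) / (ζ p.1 - ζ p.2)).re) u := by
      intro p hp
      have hne : p.1 ≠ p.2 := ne_of_lt (Finset.mem_filter.mp hp).2
      have hz0 : z u p.1 - z u p.2 ≠ 0 := sub_ne_zero.mpr (hdist u _ _ hne)
      have hw : HasDerivAt (fun r => z r p.1 - z r p.2) (c * v p.1 - c * v p.2) u :=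
        (hode p.1 u).sub (hode p.2 u)
      exact (logAbsDeriv hw hz0).const_mul _
    have hsum := HasDerivAt.fun_sum hterm
    -- algebra: the sum of derivatives vanishes
    set g : Fin N × Fin N → ℂ := fun p =>
      ((Γ p.1 * Γ p.2 : ℝ) : ℂ) * ((c * v p.1 - c * v p.2) / (ζ p.1 - ζ p.2)) with hg
    set a : Fin N → Fin N → ℂ := fun k l =>
      ((Γ k * Γ l : ℝ) : ℂ) * ((c * v k) / (ζ k - ζ l)) with ha
    have hgsymm : ∀ k l : Fin N, g (l, k) = g (k, l) := by
      intro k l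
      simp only [hg]
      rw [show ζ l - ζ k = -(ζ k - ζ l) by ring,
        show c * v l - c * v k = -(c * v k - c * v l) by ring, neg_div_neg_eq,
        mul_comm (Γ l) (Γ k)]
    have hgdiag : ∀ k : Fin N, g (k, k) = 0 := by
      intro k; simp [hg]
    have hsplit : ∀ k l : Fin N, g (k, l) = a k l + a l k := by
      intro k l
      by_cases hkl : k = l
      · subst hkl
        simp [hg, ha]
      · simp only [hg, ha]
        rw [show ζ l - ζ k = -(ζ k - ζ l) by ring, div_neg, mul_neg,
          mul_comm (Γ l) (Γ k)]
        rw [sub_div, mul_sub]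
        ring
    -- conjugate identity : ∑ l, Γ l / (ζ k - ζ l) = conj (v k)
    have hconj : ∀ k : Fin N, ∑ l : Fin N, (Γ l : ℂ) / (ζ k - ζ l) = (starRingEnd ℂ) (v k) := by
      intro k
      have h1 : ∑ l ∈ Finset.univ.erase k, (Γ l : ℂ) / (ζ k - ζ l)
          = (starRingEnd ℂ) (v k) := by
        rw [hv, map_sum]
        refine Finset.sum_congr rfl fun l _ => ?_
        rw [map_div₀, map_sub, Complex.conj_conj, Complex.conj_conj, Complex.conj_ofReal]
      rw [← h1, ← Finset.sum_erase_add _ _ (Finset.mem_univ k)]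
      simp
    -- inner sum computation
    have hinner : ∀ k : Fin N, ∑ l : Fin N, a k l
        = (Γ k : ℂ) * (c * v k) * (starRingEnd ℂ) (v k) := by
      intro k
      have : ∀ l : Fin N, a k l = (Γ k : ℂ) * (c * v k) * ((Γ l : ℂ) / (ζ k - ζ l)) := by
        intro l
        simp only [ha]
        push_cast
        ring
      rw [Finset.sum_congr rfl (fun l _ => this l), ← Finset.mul_sum, hconj k]
    -- total double sum
    set R : ℝ := ∑ k : Fin N, Γ k * Complex.normSq (v k) with hR
    have hA : ∑ k : Fin N, ∑ l : Fin N, a k l = c * (R : ℂ) := by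
      rw [Finset.sum_congr rfl (fun k _ => hinner k), hR]
      push_cast
      rw [Finset.mul_sum]
      refine Finset.sum_congr rfl fun k _ => ?_
      rw [← Complex.mul_conj]
      ring
    have hT : ∑ p : Fin N × Fin N, g p = c * (R : ℂ) + c * (R : ℂ) := by
      rw [Fintype.sum_prod_type]
      calc ∑ k : Fin N, ∑ l : Fin N, g (k, l)
          = ∑ k : Fin N, ∑ l : Fin N, (a k l + a l k) := by
            exact Finset.sum_congr rfl fun k _ => Finset.sum_congr rfl fun l _ => hsplit k l
        _ = (∑ k : Fin N, ∑ l : Fin N, a k l) + ∑ k : Fin N, ∑ l : Fin N, a l k := by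
            rw [← Finset.sum_add_distrib]
            exact Finset.sum_congr rfl fun k _ => Finset.sum_add_distrib
        _ = (∑ k : Fin N, ∑ l : Fin N, a k l) + ∑ l : Fin N, ∑ k : Fin N, a l k :=
            by rw [Finset.sum_comm]
        _ = c * (R : ℂ) + c * (R : ℂ) := by rw [hA]
    have hTP : ∑ p : Fin N × Fin N, g p = (∑ p ∈ P, g p) + ∑ p ∈ P, g p := by
      rw [← Finset.sum_filter_add_sum_filter_not Finset.univ
        (fun p : Fin N × Fin N => p.1 < p.2) g]
      congr 1
      -- ∑ over ¬(p.1 < p.2) equals ∑ over P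
      have h1 : ∑ p ∈ Finset.univ.filter (fun p : Fin N × Fin N => ¬ p.1 < p.2), g p
          = ∑ p ∈ Finset.univ.filter (fun p : Fin N × Fin N => p.2 < p.1), g p := by
        refine (Finset.sum_subset ?_ ?_).symm
        · intro p hp
          simp only [Finset.mem_filter, Finset.mem_univ, true_and] at hp ⊢
          exact not_lt_of_gt hp
        · rintro ⟨p1, p2⟩ hp hnp
          simp only [Finset.mem_filter, Finset.mem_univ, true_and] at hp hnp
          have h12 : p1 = p2 := le_antisymm (not_lt.mp hnp) (not_lt.mp hp)
          subst h12
          exact hgdiag p1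
      rw [h1]
      refine Finset.sum_nbij' Prod.swap Prod.swap ?_ ?_ ?_ ?_ ?_
      · intro p hp
        simp only [Finset.mem_filter, Finset.mem_univ, true_and, hP] at hp ⊢
        exact hp
      · intro p hp
        simp only [Finset.mem_filter, Finset.mem_univ, true_and, hP] at hp ⊢
        exact hp
      · intro p _; simp
      · intro p _; simp
      · rintro ⟨p1, p2⟩ _
        exact hgsymm p2 p1
    have hcre : c.re = 0 := by
      simp [hc, Complex.div_re]
    have hPzero : (∑ p ∈ P, g p).re = 0 := by
      have h2 : (∑ p ∈ P, g p) + (∑ p ∈ P, g p) = c * (R : ℂ) + c * (R : ℂ) := by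
        rw [← hTP, hT]
      have h3 := congrArg Complex.re h2
      simp only [Complex.add_re] at h3
      have h4 : (c * (R : ℂ)).re = 0 := by
        simp [Complex.mul_re, hcre]
      rw [h4] at h3
      linarith
    have hD : ∑ p ∈ P, Γ p.1 * Γ p.2 * ((c * v p.1 - c * v p.2) / (ζ p.1 - ζ p.2)).re = 0 := by
      rw [← hPzero, Complex.re_sum]
      refine Finset.sum_congr rfl fun p _ => ?_
      simp only [hg, Complex.re_ofReal_mul]
    rw [← hD]
    exact hsum
  intro t s
  exact is_const_of_deriv_eq_zero (fun x => (key x).differentiableAt)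
    (fun x => (key x).deriv) t s
end

section
/- Let n, d ∈ ℕ and let α : Fin n → ℤ^d be integer weight vectors. The torus T = ℝ^d acts on ℂ^n by θ·z = (exp(i·⟨αₖ, θ⟩)·zₖ)ₖ, where ⟨αₖ, θ⟩ = ∑ⱼ αₖⱼ·θⱼ, and the associated momentum map is Φ : ℂ^n → ℝ^d, Φ(z) = (1/2)·∑ₖ |zₖ|²·αₖ. Then Φ is open relative to its image: for every open set U ⊆ ℂ^n invariant under this action, Φ(U) is open in Φ(ℂ^n) = { ∑ₖ tₖ·αₖ : tₖ ≥ 0 } with the subspace topology induced from ℝ^d. -/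
section AuxLemmas

open Finset

variable {ι : Type*} [Fintype ι] [DecidableEq ι]
variable {F : Type*} [NormedAddCommGroup F] [NormedSpace ℝ F]

lemma lem1 (v : ι → F) (S : Finset ι) (h : LinearIndependent ℝ (fun i : S => v i)) :
    ∃ C > 0, ∀ μ : ι → ℝ, (∀ i ∉ S, μ i = 0) → ‖μ‖ ≤ C * ‖∑ i, μ i • v i‖ := by
  set T : (S → ℝ) →ₗ[ℝ] F :=
    { toFun := fun f => ∑ i : S, f i • v i
      map_add' := by intro f g; simp [add_smul, Finset.sum_add_distrib]
      map_smul' := by intro c f; simp [Finset.smul_sum, smul_smul] } with hT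
  have hker : LinearMap.ker T = ⊥ := by
    rw [LinearMap.ker_eq_bot]
    intro f g hfg
    have h2 : ∀ i : S, (f - g) i = 0 := by
      apply Fintype.linearIndependent_iff.mp h
      have : T (f - g) = 0 := by rw [map_sub, hfg, sub_self]
      simpa [hT] using this
    funext i
    have := h2 i
    simpa [sub_eq_zero] using this
  obtain ⟨K, hK0, hK⟩ := T.exists_antilipschitzWith hker
  refine ⟨K, by exact_mod_cast hK0, ?_⟩
  intro μ hμ
  set f : S → ℝ := fun i => μ i with hf
  have h1 : ‖μ‖ ≤ ‖f‖ := by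
    apply pi_norm_le_iff_of_nonneg (norm_nonneg f) |>.mpr
    intro i
    by_cases hi : i ∈ S
    · exact norm_le_pi_norm f ⟨i, hi⟩
    · simp [hμ i hi]
  have h2 : T f = ∑ i, μ i • v i := by
    show ∑ i : S, μ i • v i = _
    rw [Finset.sum_coe_sort S (fun i => μ i • v i)]
    exact Finset.sum_subset (Finset.subset_univ S) (by intro i _ hi; simp [hμ i hi])
  have h3 : ‖f‖ ≤ K * ‖T f‖ := by
    have := hK.le_mul_dist f 0
    simpa [dist_eq_norm] using this
  calc ‖μ‖ ≤ ‖f‖ := h1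
    _ ≤ K * ‖T f‖ := h3
    _ = K * ‖∑ i, μ i • v i‖ := by rw [h2]

lemma lem2 (v : ι → F) : ∀ (N : ℕ) (lam : ι → ℝ), (∀ i, 0 ≤ lam i) →
    ((Finset.univ.filter fun i => lam i ≠ 0).card ≤ N) →
    ∃ S : Finset ι, LinearIndependent ℝ (fun i : S => v i) ∧
      ∃ μ : ι → ℝ, (∀ i, 0 ≤ μ i) ∧ (∀ i ∉ S, μ i = 0) ∧
        ∑ i, μ i • v i = ∑ i, lam i • v i := by
  intro N
  induction N with
  | zero =>
    intro lam h0 hcard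
    have hS0 : (Finset.univ.filter fun i => lam i ≠ 0) = ∅ := Finset.card_eq_zero.mp (Nat.le_zero.mp hcard)
    refine ⟨∅, linearIndependent_empty_type, lam, h0, ?_, rfl⟩
    intro i _
    by_contra hne
    have : i ∈ (Finset.univ.filter fun i => lam i ≠ 0) := by simp [hne]
    simp [hS0] at this
  | succ N ih =>
    intro lam h0 hcard
    set S0 := Finset.univ.filter fun i => lam i ≠ 0 with hS0
    by_cases hind : LinearIndependent ℝ (fun i : S0 => v i)
    · refine ⟨S0, hind, lam, h0, ?_, rfl⟩
      intro i hi
      by_contra hne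
      exact hi (by simp [hS0, hne])
    · obtain ⟨g, hg0, i1, hi1⟩ := Fintype.not_linearIndependent_iff.mp hind
      -- extend g to ι by zero
      set gh : ι → ℝ := fun i => if h : i ∈ S0 then g ⟨i, h⟩ else 0 with hgh
      have hghsum : ∑ i, gh i • v i = 0 := by
        have h1 : ∑ i, gh i • v i = ∑ i ∈ S0, gh i • v i :=
          (Finset.sum_subset (Finset.subset_univ S0) (by intro i _ hi; simp [hgh, hi])).symm
        rw [h1, ← Finset.sum_coe_sort S0 (fun i => gh i • v i), ← hg0]
        exact Finset.sum_congr rfl (fun i _ => by simp [hgh, i.2])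
      have hghsupp : ∀ i ∉ S0, gh i = 0 := by intro i hi; simp [hgh, hi]
      have hghne : ∃ c ∈ ({gh, -gh} : Set (ι → ℝ)), ∃ i, 0 < c i := by
        rcases lt_or_gt_of_ne hi1 with hlt | hgt
        · exact ⟨-gh, by simp, i1, by simp [hgh, i1.2]; linarith⟩
        · exact ⟨gh, by simp, i1, by simpa [hgh, i1.2] using hgt⟩
      obtain ⟨c, hc, i2, hi2⟩ := hghne
      have hcsum : ∑ i, c i • v i = 0 := by
        rcases hc with rfl | hc
        · exact hghsum
        · simp at hc; subst hc
          simp only [Pi.neg_apply, neg_smul, Finset.sum_neg_distrib]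
          rw [hghsum, neg_zero]
      have hcsupp : ∀ i ∉ S0, c i = 0 := by
        rcases hc with rfl | hc
        · exact hghsupp
        · simp at hc; subst hc; intro i hi; simp [hghsupp i hi]
      -- minimize lam i / c i over positive c i
      have hPne : (Finset.univ.filter fun i => 0 < c i).Nonempty := ⟨i2, by simp [hi2]⟩
      obtain ⟨i0, hi0mem, hi0min⟩ :=
        Finset.exists_min_image _ (fun i => lam i / c i) hPne
      have hci0 : 0 < c i0 := by simpa using hi0mem
      set τ := lam i0 / c i0 with hτ
      have hτ0 : 0 ≤ τ := div_nonneg (h0 i0) hci0.le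
      set lam' : ι → ℝ := fun i => lam i - τ * c i with hlam'
      have h0' : ∀ i, 0 ≤ lam' i := by
        intro i
        by_cases hci : 0 < c i
        · have hmin := hi0min i (by simp [hci])
          have h2 : τ * c i ≤ lam i := by
            have h3 := mul_le_mul_of_nonneg_right hmin hci.le
            rwa [div_mul_cancel₀ _ hci.ne'] at h3
          simp only [hlam']
          linarith
        · push_neg at hci
          have h2 : τ * c i ≤ 0 := mul_nonpos_of_nonneg_of_nonpos hτ0 hci
          have h3 := h0 i
          simp only [hlam']
          linarith
      have hsum' : ∑ i, lam' i • v i = ∑ i, lam i • v i := by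
        simp only [hlam', sub_smul, Finset.sum_sub_distrib, mul_smul]
        rw [← Finset.smul_sum, hcsum, smul_zero, sub_zero]
      have hi0S0 : i0 ∈ S0 := by
        by_contra h
        exact absurd (hcsupp i0 h) hci0.ne'
      have hsupp' : (Finset.univ.filter fun i => lam' i ≠ 0) ⊆ S0.erase i0 := by
        intro i hi
        simp only [Finset.mem_filter, Finset.mem_univ, true_and] at hi
        rw [Finset.mem_erase]
        constructor
        · rintro rfl
          apply hi
          simp [hlam', hτ, div_mul_cancel₀ _ hci0.ne']
        · by_contra h
          have hlam0 : lam i = 0 := by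
            by_contra hh
            exact h (by simp [hS0, hh])
          exact hi (by simp [hlam', hlam0, hcsupp i h])
      have hcard' : (Finset.univ.filter fun i => lam' i ≠ 0).card ≤ N := by
        have h1 := Finset.card_le_card hsupp'
        have h2 : (S0.erase i0).card ≤ S0.card - 1 := le_of_eq (Finset.card_erase_of_mem hi0S0)
        have h3 : S0.card ≤ N + 1 := hcard
        omega
      obtain ⟨S, hS, μ, hμ0, hμsupp, hμsum⟩ := ih lam' h0' hcard'
      exact ⟨S, hS, μ, hμ0, hμsupp, by rw [hμsum, hsum']⟩

lemma lem3 (v : ι → F) : ∃ C > 0, ∀ lam : ι → ℝ, (∀ i, 0 ≤ lam i) →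
    ∃ μ : ι → ℝ, (∀ i, 0 ≤ μ i) ∧ (∑ i, μ i • v i = ∑ i, lam i • v i) ∧
      ‖μ‖ ≤ C * ‖∑ i, lam i • v i‖ := by
  have hC : ∀ S : Finset ι, ∃ C : ℝ, 0 < C ∧
      (LinearIndependent ℝ (fun i : S => v i) →
        ∀ μ : ι → ℝ, (∀ i ∉ S, μ i = 0) → ‖μ‖ ≤ C * ‖∑ i, μ i • v i‖) := by
    intro S
    by_cases h : LinearIndependent ℝ (fun i : S => v i)
    · obtain ⟨C, hC0, hCs⟩ := lem1 v S h
      exact ⟨C, hC0, fun _ => hCs⟩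
    · exact ⟨1, one_pos, fun h' => absurd h' h⟩
  choose Cf hCf0 hCfs using hC
  refine ⟨∑ S : Finset ι, Cf S, Finset.sum_pos (fun S _ => hCf0 S) Finset.univ_nonempty, ?_⟩
  intro lam hlam
  obtain ⟨S, hS, μ, hμ0, hμsupp, hμsum⟩ :=
    lem2 v (Finset.univ.filter fun i => lam i ≠ 0).card lam hlam le_rfl
  refine ⟨μ, hμ0, hμsum, ?_⟩
  calc ‖μ‖ ≤ Cf S * ‖∑ i, μ i • v i‖ := hCfs S hS μ hμsupp
    _ = Cf S * ‖∑ i, lam i • v i‖ := by rw [hμsum]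
    _ ≤ (∑ S : Finset ι, Cf S) * ‖∑ i, lam i • v i‖ := by
        apply mul_le_mul_of_nonneg_right _ (norm_nonneg _)
        exact Finset.single_le_sum (fun S _ => (hCf0 S).le) (Finset.mem_univ S)

lemma lem4 {n : ℕ} (v : Fin n → F) (t0 : Fin n → ℝ) (ht0 : ∀ k, 0 ≤ t0 k)
    (ε : ℝ) (hε : 0 < ε) :
    ∃ η > 0, ∀ s : Fin n → ℝ, (∀ k, 0 ≤ s k) →
      ‖(∑ k, s k • v k) - ∑ k, t0 k • v k‖ < η →
      ∃ t : Fin n → ℝ, (∀ k, 0 ≤ t k) ∧ (∑ k, t k • v k = ∑ k, s k • v k) ∧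
        ‖t - t0‖ < ε := by
  classical
  set w : (Fin n ⊕ Fin n) → F :=
    Sum.elim v (fun k => if t0 k = 0 then 0 else -v k) with hw
  obtain ⟨C, hC0, hCs⟩ := lem3 w
  set Fs : Finset ℝ := insert ε ((Finset.univ.filter fun k => 0 < t0 k).image t0) with hFs
  have hFne : Fs.Nonempty := ⟨ε, by simp [hFs]⟩
  set δ := Fs.min' hFne with hδ
  have hδ0 : 0 < δ := by
    apply (Finset.lt_min'_iff Fs hFne).mpr
    intro y hy
    simp only [hFs, Finset.mem_insert, Finset.mem_image, Finset.mem_filter] at hy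
    rcases hy with rfl | ⟨k, ⟨_, hk⟩, rfl⟩
    · exact hε
    · exact hk
  have hδε : δ ≤ ε := Finset.min'_le Fs ε (by simp [hFs])
  have hδt0 : ∀ k, 0 < t0 k → δ ≤ t0 k := by
    intro k hk
    apply Finset.min'_le Fs (t0 k)
    simp only [hFs, Finset.mem_insert, Finset.mem_image, Finset.mem_filter]
    exact Or.inr ⟨k, ⟨Finset.mem_univ k, hk⟩, rfl⟩
  refine ⟨δ / (2 * C + 1), by positivity, ?_⟩
  intro s hs hnear
  set W := (∑ k, s k • v k) - ∑ k, t0 k • v k with hW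
  set lam : Fin n ⊕ Fin n → ℝ := Sum.elim
    (fun k => if t0 k = 0 then s k else max (s k - t0 k) 0)
    (fun k => if t0 k = 0 then 0 else max (t0 k - s k) 0) with hlam
  have hlam0 : ∀ i, 0 ≤ lam i := by
    rintro (k | k)
    · simp only [hlam, Sum.elim_inl]
      split
      · exact hs k
      · exact le_max_right _ _
    · simp only [hlam, Sum.elim_inr]
      split
      · exact le_refl 0
      · exact le_max_right _ _
  have hlamsum : ∑ i, lam i • w i = W := by
    rw [Fintype.sum_sum_type]
    have hterm : ∀ k, lam (Sum.inl k) • w (Sum.inl k) + lam (Sum.inr k) • w (Sum.inr k)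
        = (s k - t0 k) • v k := by
      intro k
      by_cases h : t0 k = 0
      · simp [hlam, hw, h]
      · simp only [hlam, hw, Sum.elim_inl, Sum.elim_inr, if_neg h]
        rw [smul_neg, ← neg_smul, ← add_smul]
        congr 1
        rcases le_total (s k) (t0 k) with hle | hle
        · rw [max_eq_right (by linarith), max_eq_left (by linarith)]
          ring
        · rw [max_eq_left (by linarith), max_eq_right (by linarith)]
          ring
    rw [← Finset.sum_add_distrib, Finset.sum_congr rfl (fun k _ => hterm k)]
    simp [hW, sub_smul, Finset.sum_sub_distrib]
  obtain ⟨μ, hμ0, hμsum, hμnorm⟩ := hCs lam hlam0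
  rw [hlamsum] at hμsum hμnorm
  set u : Fin n → ℝ := fun k => μ (Sum.inl k) - (if t0 k = 0 then 0 else μ (Sum.inr k))
    with hu
  have husum : ∑ k, u k • v k = W := by
    rw [← hμsum, Fintype.sum_sum_type, ← Finset.sum_add_distrib]
    apply Finset.sum_congr rfl
    intro k _
    by_cases h : t0 k = 0
    · simp [hu, hw, h]
    · simp [hu, hw, h, sub_eq_add_neg, add_smul, neg_smul]
  have hμb : ∀ i, |μ i| ≤ C * ‖W‖ := by
    intro i
    calc |μ i| = ‖μ i‖ := rfl
      _ ≤ ‖μ‖ := norm_le_pi_norm μ i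
      _ ≤ C * ‖W‖ := hμnorm
  have hCW : C * ‖W‖ < δ / 2 := by
    have h1 : ‖W‖ < δ / (2 * C + 1) := hnear
    have h2 : C * ‖W‖ < C * (δ / (2 * C + 1)) := by
      apply mul_lt_mul_of_pos_left h1 hC0
    have h3 : C * (δ / (2 * C + 1)) ≤ δ / 2 := by
      rw [← mul_div_assoc, div_le_div_iff₀ (by positivity) two_pos]
      nlinarith [hδ0, hC0]
    linarith
  have hub : ∀ k, |u k| < δ := by
    intro k
    have h1 := hμb (Sum.inl k)
    have h2 := hμb (Sum.inr k)
    by_cases h : t0 k = 0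
    · simp only [hu, if_pos h, sub_zero]
      linarith
    · simp only [hu, if_neg h]
      calc |μ (Sum.inl k) - μ (Sum.inr k)| ≤ |μ (Sum.inl k)| + |μ (Sum.inr k)| := abs_sub _ _
        _ < δ := by linarith
  refine ⟨fun k => t0 k + u k, ?_, ?_, ?_⟩
  · intro k
    show 0 ≤ t0 k + u k
    by_cases h : t0 k = 0
    · have h5 : u k = μ (Sum.inl k) := by simp [hu, h]
      rw [h, h5, zero_add]
      exact hμ0 (Sum.inl k)
    · have hpos : 0 < t0 k := lt_of_le_of_ne (ht0 k) (Ne.symm h)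
      have h6 := hδt0 k hpos
      have h7 := (abs_lt.mp (hub k)).1
      linarith
  · simp only [add_smul, Finset.sum_add_distrib, husum, hW]
    abel
  · rw [pi_norm_lt_iff hε]
    intro k
    have : (fun k => t0 k + u k) - t0 = u := by
      funext k
      simp
    rw [this]
    calc ‖u k‖ = |u k| := rfl
      _ < δ := hub k
      _ ≤ ε := hδε
end AuxLemmas

theorem statement17 (n d : ℕ) (α : Fin n → Fin d → ℤ) :
    Set.range (fun z : Fin n → ℂ => fun j : Fin d =>
        (1 / 2 : ℝ) * ∑ k, ‖z k‖ ^ 2 * (α k j : ℝ))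
      = {y : Fin d → ℝ | ∃ t : Fin n → ℝ, (∀ k, 0 ≤ t k) ∧
          y = fun j : Fin d => ∑ k, t k * (α k j : ℝ)} ∧
    ∀ U : Set (Fin n → ℂ), IsOpen U →
      (∀ (θ : Fin d → ℝ) (z : Fin n → ℂ), z ∈ U →
        (fun k => Complex.exp (Complex.I * ∑ j, (α k j : ℂ) * (θ j : ℂ)) * z k) ∈ U) →
      ∃ V : Set (Fin d → ℝ), IsOpen V ∧
        (fun z : Fin n → ℂ => fun j : Fin d =>
            (1 / 2 : ℝ) * ∑ k, ‖z k‖ ^ 2 * (α k j : ℝ)) '' U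
          = V ∩ Set.range (fun z : Fin n → ℂ => fun j : Fin d =>
              (1 / 2 : ℝ) * ∑ k, ‖z k‖ ^ 2 * (α k j : ℝ)) := by
  classical
  set Φ : (Fin n → ℂ) → (Fin d → ℝ) := fun z : Fin n → ℂ => fun j : Fin d =>
      (1 / 2 : ℝ) * ∑ k, ‖z k‖ ^ 2 * (α k j : ℝ) with hΦ
  set v : Fin n → (Fin d → ℝ) := fun k j => (α k j : ℝ) with hv
  have key : ∀ z : Fin n → ℂ, Φ z = ∑ k, (‖z k‖ ^ 2 / 2) • v k := by
    intro z
    funext j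
    rw [hΦ]
    simp only [Finset.sum_apply, Pi.smul_apply, hv, smul_eq_mul, Finset.mul_sum]
    exact Finset.sum_congr rfl fun k _ => by ring
  have keyt : ∀ t : Fin n → ℝ, (∀ k, 0 ≤ t k) →
      Φ (fun k => ((Real.sqrt (2 * t k) : ℝ) : ℂ)) = ∑ k, t k • v k := by
    intro t ht
    rw [key]
    apply Finset.sum_congr rfl
    intro k _
    congr 1
    rw [Complex.norm_real, Real.norm_eq_abs, abs_of_nonneg (Real.sqrt_nonneg _),
      Real.sq_sqrt (by linarith [ht k])]
    ring
  have hsumfun : ∀ t : Fin n → ℝ,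
      (fun j : Fin d => ∑ k, t k * (α k j : ℝ)) = ∑ k, t k • v k := by
    intro t
    funext j
    simp [hv, Finset.sum_apply]
  constructor
  · ext y
    simp only [Set.mem_range, Set.mem_setOf_eq]
    constructor
    · rintro ⟨z, rfl⟩
      refine ⟨fun k => ‖z k‖ ^ 2 / 2, fun k => by positivity, ?_⟩
      rw [hsumfun]
      exact key z
    · rintro ⟨t, ht, rfl⟩
      refine ⟨fun k => ((Real.sqrt (2 * t k) : ℝ) : ℂ), ?_⟩
      rw [hsumfun]
      exact keyt t ht
  · intro U hU _
    have claim : ∀ z0 ∈ U, ∃ η > 0,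
        ∀ y ∈ Metric.ball (Φ z0) η ∩ Set.range Φ, y ∈ Φ '' U := by
      intro z0 hz0
      obtain ⟨ε, hε0, hball⟩ := Metric.isOpen_iff.mp hU z0 hz0
      set t0 : Fin n → ℝ := fun k => ‖z0 k‖ ^ 2 / 2 with ht0def
      have ht0 : ∀ k, 0 ≤ t0 k := fun k => by positivity
      set ph : Fin n → ℂ := fun k =>
        if z0 k = 0 then 1 else z0 k / (‖z0 k‖ : ℂ) with hph
      have hphabs : ∀ k, ‖ph k‖ = 1 := by
        intro k
        rw [hph]
        by_cases h : z0 k = 0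
        · simp [h]
        · have habs : ‖z0 k‖ ≠ 0 := by
            simpa using h
          simp only [if_neg h, norm_div, Complex.norm_real, norm_norm,
            abs_of_nonneg (norm_nonneg (z0 k))]
          exact div_self habs
      set g : (Fin n → ℝ) → (Fin n → ℂ) :=
        fun t k => ((Real.sqrt (2 * t k) : ℝ) : ℂ) * ph k with hg
      have hg0 : g t0 = z0 := by
        funext k
        rw [hg, hph]
        simp only
        have : Real.sqrt (2 * t0 k) = ‖z0 k‖ := by
          rw [ht0def]
          simp only
          rw [show 2 * (‖z0 k‖ ^ 2 / 2) = ‖z0 k‖ ^ 2 by ring]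
          exact Real.sqrt_sq (norm_nonneg _)
        rw [this]
        by_cases h : z0 k = 0
        · simp [h]
        · have habs : (‖z0 k‖ : ℂ) ≠ 0 := by
            simpa using h
          rw [if_neg h, mul_div_cancel₀ _ habs]
      have hgc : Continuous g := by
        apply continuous_pi
        intro k
        exact ((Complex.continuous_ofReal.comp
          (Real.continuous_sqrt.comp (continuous_const.mul (continuous_apply k)))).mul
          continuous_const)
      obtain ⟨ε2, hε20, hgball⟩ :=
        Metric.continuousAt_iff.mp hgc.continuousAt ε hε0
      obtain ⟨η, hη0, hlem⟩ := lem4 v t0 ht0 ε2 hε20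
      refine ⟨η, hη0, ?_⟩
      rintro y ⟨hyball, z1, rfl⟩
      set s : Fin n → ℝ := fun k => ‖z1 k‖ ^ 2 / 2 with hsdef
      have hs0 : ∀ k, 0 ≤ s k := fun k => by positivity
      have hnear : ‖(∑ k, s k • v k) - ∑ k, t0 k • v k‖ < η := by
        rw [← key z1, ← key z0, ← dist_eq_norm]
        exact Metric.mem_ball.mp hyball
      obtain ⟨t, htpos, htsum, htnear⟩ := hlem s hs0 hnear
      refine ⟨g t, hball ?_, ?_⟩
      · have : dist (g t) (g t0) < ε := by
          apply hgball
          rw [dist_eq_norm]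
          exact htnear
        rw [hg0] at this
        exact Metric.mem_ball.mp this
      · have habs2 : ∀ k, ‖g t k‖ ^ 2 = 2 * t k := by
          intro k
          rw [hg]
          simp only [norm_mul, Complex.norm_real, Real.norm_eq_abs, hphabs k, mul_one,
            abs_of_nonneg (Real.sqrt_nonneg _)]
          exact Real.sq_sqrt (by linarith [htpos k])
        rw [key (g t), key z1]
        rw [← htsum]
        apply Finset.sum_congr rfl
        intro k _
        rw [habs2 k]
        congr 1
        ring
  -- build V
    choose η hη0 hηs using claim
    refine ⟨⋃ (z0 : Fin n → ℂ) (h : z0 ∈ U), Metric.ball (Φ z0) (η z0 h),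
      isOpen_iUnion fun z0 => isOpen_iUnion fun h => Metric.isOpen_ball, ?_⟩
    ext y
    constructor
    · rintro ⟨z0, hz0, rfl⟩
      exact ⟨Set.mem_iUnion.mpr ⟨z0, Set.mem_iUnion.mpr
        ⟨hz0, Metric.mem_ball_self (hη0 z0 hz0)⟩⟩, ⟨z0, rfl⟩⟩
    · rintro ⟨hyV, hyR⟩
      obtain ⟨z0, hz⟩ := Set.mem_iUnion.mp hyV
      obtain ⟨hz0, hballmem⟩ := Set.mem_iUnion.mp hz
      exact hηs z0 hz0 y ⟨hballmem, hyR⟩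
end

section
/- Let σ ∈ ℝ with σ ≠ 0, and let A(w,θ)(μ, m) = ( e^{iθ}·μ + i·σ·w, m + Im(conj(w)·e^{iθ}·μ) + σ·|w|²/2 ) be the modified coadjoint action of SE(2) on ℂ × ℝ. Then for every (μ, m) ∈ ℂ × ℝ and every θ ∈ ℝ there is exactly one w ∈ ℂ with A(w,θ)(μ, m) = (μ, m), namely w = −i·(1 − e^{iθ})·μ/σ. Hence the isotropy subgroup of every point (μ, m) projects bijectively onto the rotation subgroup and is isomorphic to SO(2); in particular it is compact. -/
private lemma statement19_aux (σ : ℝ) (hσ : σ ≠ 0) (μ : ℂ) (m θ : ℝ) (w : ℂ) :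
    (Complex.exp (θ * Complex.I) * μ + Complex.I * (σ : ℂ) * w = μ ∧
      m + ((starRingEnd ℂ) w * (Complex.exp (θ * Complex.I) * μ)).im
        + σ * ‖w‖ ^ 2 / 2 = m) ↔
    w = -Complex.I * (1 - Complex.exp (θ * Complex.I)) * μ / (σ : ℂ) := by
  have hσ' : (σ : ℂ) ≠ 0 := Complex.ofReal_ne_zero.mpr hσ
  have hsc := Real.sin_sq_add_cos_sq θ
  rw [Complex.exp_mul_I]
  simp only [Complex.ext_iff, Complex.sq_norm, Complex.normSq_apply, Complex.add_re,
    Complex.add_im, Complex.mul_re, Complex.mul_im, Complex.I_re, Complex.I_im,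
    Complex.ofReal_re, Complex.ofReal_im, Complex.one_re, Complex.one_im,
    Complex.sub_re, Complex.sub_im, Complex.neg_re, Complex.neg_im,
    Complex.div_re, Complex.div_im, Complex.cos_ofReal_re, Complex.cos_ofReal_im,
    Complex.sin_ofReal_re, Complex.sin_ofReal_im,
    Complex.conj_re, Complex.conj_im]
  constructor
  · rintro ⟨⟨h1, h2⟩, h3⟩
    constructor <;> field_simp
    · linear_combination σ * h2
    · linear_combination -σ * h1
  · rintro ⟨h1, h2⟩
    field_simp at h1 h2
    have hw1 : σ * w.re = -(Real.sin θ * μ.re) - (Real.cos θ - 1) * μ.im :=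
      mul_left_cancel₀ hσ (by linear_combination h1)
    have hw2 : σ * w.im = -(Real.sin θ * μ.im) + (Real.cos θ - 1) * μ.re :=
      mul_left_cancel₀ hσ (by linear_combination h2)
    refine ⟨⟨?_, ?_⟩, ?_⟩
    · linear_combination -hw2
    · linear_combination hw1
    · have G : σ * ((w.re * (Real.cos θ * μ.im + Real.sin θ * μ.re) +
          -(w.im * (Real.cos θ * μ.re - Real.sin θ * μ.im))) * 2
          + σ * (w.re * w.re + w.im * w.im)) = 0 := by
        linear_combination (2*(Real.cos θ * μ.im + Real.sin θ * μ.re) + σ * w.re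
            + (-(Real.sin θ * μ.re) - (Real.cos θ - 1) * μ.im)) * hw1
          + (-2*(Real.cos θ * μ.re - Real.sin θ * μ.im) + σ * w.im
            + (-(Real.sin θ * μ.im) + (Real.cos θ - 1) * μ.re)) * hw2
          - (μ.re^2 + μ.im^2) * hsc
      rcases mul_eq_zero.mp G with h | h
      · exact absurd h hσ
      · linarith

theorem statement19 (σ : ℝ) (hσ : σ ≠ 0) (A : ℂ → ℝ → ℂ × ℝ → ℂ × ℝ)
    (hA : ∀ (w : ℂ) (θ : ℝ) (p : ℂ × ℝ),
      A w θ p = (Complex.exp (θ * Complex.I) * p.1 + Complex.I * (σ : ℂ) * w,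
        p.2 + ((starRingEnd ℂ) w * (Complex.exp (θ * Complex.I) * p.1)).im
          + σ * ‖w‖ ^ 2 / 2)) :
    ∀ (μ : ℂ) (m : ℝ) (θ : ℝ) (w : ℂ),
      A w θ (μ, m) = (μ, m) ↔
        w = -Complex.I * (1 - Complex.exp (θ * Complex.I)) * μ / (σ : ℂ) := by
  intro μ m θ w
  rw [hA, Prod.mk.injEq]
  exact statement19_aux σ hσ μ m θ w
end
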